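/- arXiv:1407.4424 — 7 statements merged into one kernel-verified Lean document; each statement's English description precedes it below -/
import Mathlib

section
/- For every N > 1 there exists a constant C > 0, depending only on N, such that for all a, a' > 0 and all y ∈ ℝ: ∫_ℝ (1 + a|x|)^{−N} (1 + a'|x − y|)^{−N} dx ≤ C · max{a, a'}^{−1} · (1 + min{a, a'}·|y|)^{−N}. -/
open MeasureTheory Real Set

noncomputable section

namespace Stmt5Aux

lemma phi_integrable {N : ℝ} (hN : 1 < N) :
    Integrable (fun x : ℝ => (1 + |x|) ^ (-N)) := by
  have h1 : ((Module.finrank ℝ ℝ : ℝ)) < N := by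
    rw [Module.finrank_self]; exact_mod_cast hN
  simpa [Real.norm_eq_abs] using integrable_one_add_norm (E := ℝ) (μ := volume) h1

lemma f_eq {N : ℝ} {b : ℝ} (hb : 0 < b) :
    (fun x : ℝ => (1 + b * |x|) ^ (-N)) = fun x : ℝ => (1 + |b * x|) ^ (-N) := by
  funext x; rw [abs_mul, abs_of_pos hb]

lemma f_integrable {N : ℝ} (hN : 1 < N) {b : ℝ} (hb : 0 < b) :
    Integrable (fun x : ℝ => (1 + b * |x|) ^ (-N)) := by
  rw [f_eq hb]
  exact (phi_integrable hN).comp_mul_left' hb.ne'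

lemma f_integral {N : ℝ} {b : ℝ} (hb : 0 < b) :
    (∫ x : ℝ, (1 + b * |x|) ^ (-N)) = b⁻¹ * ∫ x : ℝ, (1 + |x|) ^ (-N) := by
  rw [f_eq hb, Measure.integral_comp_mul_left (fun u : ℝ => (1 + |u|) ^ (-N)) b,
    abs_of_pos (inv_pos.2 hb), smul_eq_mul]

lemma g_integrable {N : ℝ} (hN : 1 < N) {b : ℝ} (hb : 0 < b) (y : ℝ) :
    Integrable (fun x : ℝ => (1 + b * |x - y|) ^ (-N)) :=
  (f_integrable hN hb).comp_sub_right y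

lemma g_integral {N : ℝ} {b : ℝ} (hb : 0 < b) (y : ℝ) :
    (∫ x : ℝ, (1 + b * |x - y|) ^ (-N)) = b⁻¹ * ∫ x : ℝ, (1 + |x|) ^ (-N) := by
  rw [integral_sub_right_eq_self (fun x : ℝ => (1 + b * |x|) ^ (-N)) y]
  exact f_integral hb

lemma key {N : ℝ} (hN : 1 < N) (a a' : ℝ) (ha : 0 < a) (ha' : 0 < a') (hle : a ≤ a')
    (y : ℝ) :
    (∫ x : ℝ, (1 + a * |x|) ^ (-N) * (1 + a' * |x - y|) ^ (-N))
      ≤ (((2:ℝ) ^ N + 4 ^ N) * ((∫ x : ℝ, (1 + |x|) ^ (-N)) + 1)) * a'⁻¹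
          * (1 + a * |y|) ^ (-N) := by
  have hNpos : (0:ℝ) < N := lt_trans one_pos hN
  have hNneg : -N ≤ 0 := by linarith
  set I : ℝ := ∫ x : ℝ, (1 + |x|) ^ (-N) with hIdef
  have hI0 : 0 ≤ I := integral_nonneg fun x => rpow_nonneg (by positivity) _
  set f : ℝ → ℝ := fun x => (1 + a * |x|) ^ (-N) with hfdef
  set g : ℝ → ℝ := fun x => (1 + a' * |x - y|) ^ (-N) with hgdef
  have hf0 : ∀ x, 0 ≤ f x := fun x => rpow_nonneg (by positivity) _
  have hg0 : ∀ x, 0 ≤ g x := fun x => rpow_nonneg (by positivity) _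
  have hf1 : ∀ x, f x ≤ 1 := fun x =>
    rpow_le_one_of_one_le_of_nonpos (by nlinarith [abs_nonneg x]) hNneg
  have hintf : Integrable f := f_integrable hN ha
  have hintg : Integrable g := g_integrable hN ha' y
  have hcontf : Continuous f :=
    (continuous_const.add (continuous_const.mul continuous_abs)).rpow_const
      (fun x => Or.inl (show (1:ℝ) + a * |x| ≠ 0 by positivity))
  have hcontg : Continuous g :=
    (continuous_const.add (continuous_const.mul
      ((continuous_id.sub continuous_const).abs))).rpow_const
      (fun x => Or.inl (show (1:ℝ) + a' * |x - y| ≠ 0 by positivity))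
  have hintfg : Integrable (fun x => f x * g x) := by
    refine hintg.mono' ((hcontf.mul hcontg).aestronglyMeasurable) ?_
    filter_upwards with x
    rw [Real.norm_eq_abs, abs_of_nonneg (mul_nonneg (hf0 x) (hg0 x))]
    exact mul_le_of_le_one_left (hg0 x) (hf1 x)
  set P : ℝ := (1 + a * |y|) ^ (-N) with hPdef
  have hP0 : 0 ≤ P := rpow_nonneg (by positivity) _
  have h2N : (0:ℝ) < 2 ^ N := rpow_pos_of_pos two_pos N
  have h4N : (0:ℝ) < 4 ^ N := rpow_pos_of_pos four_pos N
  have ha'inv : (0:ℝ) < a'⁻¹ := inv_pos.2 ha'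
  rcases le_or_gt (a * |y|) 1 with hy | hy
  · -- small case : just bound f ≤ 1
    have h1 : (1:ℝ) ≤ 2 ^ N * P := by
      have h2 : (2:ℝ) ^ (-N) ≤ P := by
        refine rpow_le_rpow_of_nonpos (by positivity) (by linarith) hNneg
      have h3 : (2:ℝ) ^ (-N) = ((2:ℝ) ^ N)⁻¹ := by
        rw [Real.rpow_neg (by norm_num)]
      calc (1:ℝ) = 2 ^ N * ((2:ℝ) ^ N)⁻¹ := by field_simp
        _ ≤ 2 ^ N * P := by
            rw [← h3]; exact mul_le_mul_of_nonneg_left h2 h2N.le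
    have h4 : (∫ x : ℝ, f x * g x) ≤ ∫ x : ℝ, g x := by
      refine integral_mono hintfg hintg fun x => ?_
      exact mul_le_of_le_one_left (hg0 x) (hf1 x)
    have h5 : (∫ x : ℝ, g x) = a'⁻¹ * I := g_integral ha' y
    have hPa : 0 ≤ a'⁻¹ * P := mul_nonneg ha'inv.le hP0
    calc (∫ x : ℝ, f x * g x) ≤ a'⁻¹ * I := by rw [← h5]; exact h4
      _ = a'⁻¹ * I * 1 := by ring
      _ ≤ a'⁻¹ * I * (2 ^ N * P) :=
          mul_le_mul_of_nonneg_left h1 (by positivity)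
      _ ≤ (((2:ℝ) ^ N + 4 ^ N) * (I + 1)) * a'⁻¹ * P := by
          have hc : 2 ^ N * I ≤ ((2:ℝ) ^ N + 4 ^ N) * (I + 1) := by nlinarith
          nlinarith [mul_le_mul_of_nonneg_right hc hPa]
  · -- main case : 1 < a * |y|
    set Q : ℝ := (1 + a' * (|y| / 2)) ^ (-N) with hQdef
    have hQ0 : 0 ≤ Q := rpow_nonneg (by positivity) _
    -- pointwise bound
    have hpt : ∀ x, f x * g x ≤ 2 ^ N * P * g x + Q * f x := by
      intro x
      rcases le_or_gt (|y| / 2) |x| with hx | hx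
      · -- |x| ≥ |y|/2 : f x ≤ 2^N * P
        have hb : (1 + a * |y|) / 2 ≤ 1 + a * |x| := by
          have := mul_le_mul_of_nonneg_left hx ha.le
          linarith
        have h3 : f x ≤ ((1 + a * |y|) / 2) ^ (-N) :=
          rpow_le_rpow_of_nonpos (by positivity) hb hNneg
        have h4 : ((1 + a * |y|) / 2 : ℝ) ^ (-N) = 2 ^ N * P := by
          rw [div_eq_mul_inv, Real.mul_rpow (by positivity) (by norm_num),
            Real.inv_rpow (by norm_num), Real.rpow_neg (by norm_num : (0:ℝ) ≤ 2),
            inv_inv, mul_comm]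
        have h5 : f x * g x ≤ (2 ^ N * P) * g x :=
          mul_le_mul_of_nonneg_right (h4 ▸ h3) (hg0 x)
        nlinarith [mul_nonneg hQ0 (hf0 x)]
      · -- |x - y| ≥ |y|/2 : g x ≤ Q
        have hxy : |y| / 2 ≤ |x - y| := by
          have h6 : |y| ≤ |x| + |x - y| := by
            have := abs_sub_abs_le_abs_sub y x
            have h7 : |y - x| = |x - y| := abs_sub_comm y x
            nlinarith [abs_sub_abs_le_abs_sub y x, abs_sub_comm y x,
              abs_nonneg (y - x)]
          linarith
        have hb : 1 + a' * (|y| / 2) ≤ 1 + a' * |x - y| := by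
          nlinarith
        have h3 : g x ≤ Q := rpow_le_rpow_of_nonpos (by positivity) hb hNneg
        have h5 : f x * g x ≤ Q * f x := by
          rw [mul_comm]
          exact mul_le_mul_of_nonneg_right h3 (hf0 x)
        nlinarith [mul_nonneg (mul_nonneg h2N.le hP0) (hg0 x)]
    -- integrate
    have hintRHS : Integrable (fun x => 2 ^ N * P * g x + Q * f x) :=
      (hintg.const_mul _).add (hintf.const_mul _)
    have hInt1 : (∫ x : ℝ, f x * g x) ≤ ∫ x : ℝ, (2 ^ N * P * g x + Q * f x) :=
      integral_mono hintfg hintRHS hpt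
    have hInt2 : (∫ x : ℝ, (2 ^ N * P * g x + Q * f x))
        = 2 ^ N * P * (a'⁻¹ * I) + Q * (a⁻¹ * I) := by
      rw [integral_add (hintg.const_mul _) (hintf.const_mul _),
        integral_const_mul, integral_const_mul, g_integral ha' y, f_integral ha]
    -- the crucial estimate : Q * a⁻¹ ≤ 4^N * (a'⁻¹ * P)
    have hQa : Q * a⁻¹ ≤ 4 ^ N * (a'⁻¹ * P) := by
      set u : ℝ := (1 + a' * (|y| / 2)) ^ N with hudef
      set v : ℝ := (1 + a * |y|) ^ N with hvdef
      have hu : 0 < u := rpow_pos_of_pos (by positivity) _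
      have hv : 0 < v := rpow_pos_of_pos (by positivity) _
      have hQu : Q = u⁻¹ := by
        rw [hQdef, hudef, ← Real.rpow_neg (by positivity)]
      have hPv : P = v⁻¹ := by
        rw [hPdef, hvdef, ← Real.rpow_neg (by positivity)]
      -- linear inequality
      have hlin : 1 + a * |y| ≤ (4 * a / a') * (1 + a' * (|y| / 2)) := by
        have he : (4 * a / a') * (1 + a' * (|y| / 2)) = 4 * a / a' + 2 * (a * |y|) := by
          field_simp; ring
        have hpos : 0 < 4 * a / a' := by positivity
        rw [he]; linarith
      have hpow : v ≤ (4 * a / a') ^ N * u := by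
        rw [hvdef, hudef, ← Real.mul_rpow (by positivity) (by positivity)]
        exact rpow_le_rpow (by positivity) hlin hNpos.le
      have hfrac : (4 * a / a') ^ N ≤ 4 ^ N * (a / a') := by
        have h8 : (4 * a / a' : ℝ) = 4 * (a / a') := by ring
        rw [h8, Real.mul_rpow (by norm_num) (by positivity)]
        refine mul_le_mul_of_nonneg_left ?_ h4N.le
        calc (a / a') ^ N ≤ (a / a') ^ (1:ℝ) :=
              rpow_le_rpow_of_exponent_ge (by positivity)
                ((div_le_one ha').2 hle) hN.le
          _ = a / a' := Real.rpow_one _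
      have hcross : a' * v ≤ 4 ^ N * (a * u) := by
        calc a' * v ≤ a' * ((4 ^ N * (a / a')) * u) := by
              refine mul_le_mul_of_nonneg_left ?_ ha'.le
              exact le_trans hpow (mul_le_mul_of_nonneg_right hfrac hu.le)
          _ = 4 ^ N * ((a / a' * a') * u) := by ring
          _ = 4 ^ N * (a * u) := by rw [div_mul_cancel₀ _ ha'.ne']
      rw [hQu, hPv]
      have h9 : u⁻¹ * a⁻¹ = 1 / (a * u) := by
        rw [one_div, mul_inv]; ring
      have h10 : (4:ℝ) ^ N * (a'⁻¹ * v⁻¹) = 4 ^ N / (a' * v) := by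
        rw [div_eq_mul_inv, mul_inv]
      rw [h9, h10, div_le_div_iff₀ (by positivity) (by positivity)]
      linarith
    have hPa : 0 ≤ a'⁻¹ * P := mul_nonneg ha'inv.le hP0
    calc (∫ x : ℝ, f x * g x) ≤ 2 ^ N * P * (a'⁻¹ * I) + Q * (a⁻¹ * I) := by
          rw [← hInt2]; exact hInt1
      _ = (2 ^ N * I) * (a'⁻¹ * P) + (Q * a⁻¹) * I := by ring
      _ ≤ (2 ^ N * I) * (a'⁻¹ * P) + (4 ^ N * (a'⁻¹ * P)) * I :=
          add_le_add_right (mul_le_mul_of_nonneg_right hQa hI0) _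
      _ = ((2 ^ N + 4 ^ N) * I) * (a'⁻¹ * P) := by ring
      _ ≤ (((2:ℝ) ^ N + 4 ^ N) * (I + 1)) * (a'⁻¹ * P) :=
          mul_le_mul_of_nonneg_right
            (mul_le_mul_of_nonneg_left (by linarith) (add_nonneg h2N.le h4N.le)) hPa
      _ = (((2:ℝ) ^ N + 4 ^ N) * (I + 1)) * a'⁻¹ * P := by ring

end Stmt5Aux

/-- Lemma on convolution-type decay estimates, cf. Grafakos:
for every `N > 1` there is a constant `C > 0` depending only on `N` such that for all
`a, a' > 0` and `y ∈ ℝ`,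
`∫ (1 + a|x|)^{-N} (1 + a'|x-y|)^{-N} dx ≤ C · max{a,a'}⁻¹ · (1 + min{a,a'}|y|)^{-N}`. -/
theorem stmt5 (N : ℝ) (hN : 1 < N) :
    ∃ C > (0 : ℝ), ∀ a a' : ℝ, 0 < a → 0 < a' → ∀ y : ℝ,
      (∫ x : ℝ, (1 + a * |x|) ^ (-N) * (1 + a' * |x - y|) ^ (-N))
        ≤ C * (max a a')⁻¹ * (1 + min a a' * |y|) ^ (-N) := by
  set I : ℝ := ∫ x : ℝ, (1 + |x|) ^ (-N) with hIdef
  have hI0 : 0 ≤ I := integral_nonneg fun x => rpow_nonneg (by positivity) _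
  have h2N : (0:ℝ) < 2 ^ N := Real.rpow_pos_of_pos two_pos N
  have h4N : (0:ℝ) < 4 ^ N := Real.rpow_pos_of_pos four_pos N
  refine ⟨((2:ℝ) ^ N + 4 ^ N) * (I + 1), by positivity, ?_⟩
  intro a a' ha ha' y
  rcases le_total a a' with hle | hle
  · rw [max_eq_right hle, min_eq_left hle]
    exact Stmt5Aux.key hN a a' ha ha' hle y
  · rw [max_eq_left hle, min_eq_right hle]
    have hswap : (∫ x : ℝ, (1 + a * |x|) ^ (-N) * (1 + a' * |x - y|) ^ (-N))
        = ∫ x : ℝ, (1 + a' * |x|) ^ (-N) * (1 + a * |x - y|) ^ (-N) := by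
      have h := integral_sub_left_eq_self
        (fun x : ℝ => (1 + a' * |x|) ^ (-N) * (1 + a * |x - y|) ^ (-N)) volume y
      rw [← h]
      congr 1
      funext x
      have h1 : y - x - y = -x := by ring
      rw [h1, abs_neg, abs_sub_comm y x, mul_comm]
    rw [hswap]
    exact Stmt5Aux.key hN a' a ha' ha hle y

end
end

section
/- For every N > 1 there exists a constant C > 0, depending only on N, such that for all a, a' > 0 and all θ ∈ ℝ with |θ| ≤ π/2: ∫_{−π}^{π} (1 + a|sin φ|)^{−N} (1 + a'|sin(φ + θ)|)^{−N} dφ ≤ C · max{a, a'}^{−1} · (1 + min{a, a'}·|θ|)^{−N}. -/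
open MeasureTheory Real Set

noncomputable section

namespace Stmt6Aux

variable {N : ℝ}

lemma gInt (hN : 1 < N) : Integrable (fun x : ℝ => (1 + |x|) ^ (-N)) := by
  have h := integrable_one_add_norm (E := ℝ) (μ := volume) (r := N) (by simpa using hN)
  simpa [Real.norm_eq_abs] using h

lemma Ipos (hN : 1 < N) : 0 < ∫ x : ℝ, (1 + |x|) ^ (-N) := by
  rw [integral_pos_iff_support_of_nonneg
      (fun x => Real.rpow_nonneg (by positivity) _) (gInt hN)]
  have hsupp : Function.support (fun x : ℝ => (1 + |x|) ^ (-N)) = Set.univ := by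
    ext x
    simp only [Function.mem_support, Set.mem_univ, iff_true]
    exact (Real.rpow_pos_of_pos (by positivity) _).ne'
  rw [hsupp]
  simp

lemma contG {b : ℝ} (hb : 0 ≤ b) {f : ℝ → ℝ} (hf : Continuous f) :
    Continuous fun φ : ℝ => (1 + b * |f φ|) ^ (-N) := by
  apply Continuous.rpow_const (by fun_prop)
  intro x
  left
  have : (0 : ℝ) < 1 + b * |f x| :=
    add_pos_of_pos_of_nonneg one_pos (mul_nonneg hb (abs_nonneg _))
  exact this.ne'

lemma hump0 (hN : 1 < N) {b : ℝ} (hb : 0 < b) :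
    ∫ x in (-(π/2))..(π/2), (1 + b * |Real.sin x|) ^ (-N) ≤
      π / (2*b) * ∫ x : ℝ, (1 + |x|) ^ (-N) := by
  set c : ℝ := 2*b/π with hc
  have hπ := pi_pos
  have hcpos : 0 < c := by positivity
  have step1 : ∫ x in (-(π/2))..(π/2), (1 + b * |Real.sin x|) ^ (-N) ≤
      ∫ x in (-(π/2))..(π/2), (1 + |c * x|) ^ (-N) := by
    apply intervalIntegral.integral_mono_on (by linarith)
    · exact ((contG hb.le continuous_sin)).intervalIntegrable _ _
    · have : Continuous fun x : ℝ => (1 + |c * x|) ^ (-N) := by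
        simpa [one_mul] using contG (b := 1) zero_le_one (continuous_const.mul continuous_id)
      exact this.intervalIntegrable _ _
    · intro x hx
      have hxle : |x| ≤ π/2 := abs_le.2 ⟨by linarith [hx.1], hx.2⟩
      have h2 : 2/π * |x| ≤ |Real.sin x| := mul_abs_le_abs_sin hxle
      have hbase : 1 + |c * x| ≤ 1 + b * |Real.sin x| := by
        rw [abs_mul, abs_of_pos hcpos]
        have : c * |x| = b * (2/π * |x|) := by rw [hc]; ring
        nlinarith [mul_le_mul_of_nonneg_left h2 hb.le]
      exact Real.rpow_le_rpow_of_nonpos (by positivity) hbase (by linarith)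
  have step2 : ∫ x in (-(π/2))..(π/2), (1 + |c * x|) ^ (-N) ≤
      ∫ x : ℝ, (1 + |c * x|) ^ (-N) := by
    rw [intervalIntegral.integral_of_le (by linarith)]
    exact setIntegral_le_integral ((gInt hN).comp_mul_left' hcpos.ne')
      (Filter.Eventually.of_forall fun x => Real.rpow_nonneg (by positivity) _)
  have step3 : (∫ x : ℝ, (1 + |c * x|) ^ (-N)) =
      π / (2*b) * ∫ x : ℝ, (1 + |x|) ^ (-N) := by
    have := MeasureTheory.Measure.integral_comp_mul_left
      (fun y : ℝ => (1 + |y|) ^ (-N)) c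
    rw [this, abs_of_pos (inv_pos.2 hcpos), smul_eq_mul, hc, inv_div]
  calc ∫ x in (-(π/2))..(π/2), (1 + b * |Real.sin x|) ^ (-N)
      ≤ ∫ x in (-(π/2))..(π/2), (1 + |c * x|) ^ (-N) := step1
    _ ≤ ∫ x : ℝ, (1 + |c * x|) ^ (-N) := step2
    _ = π / (2*b) * ∫ x : ℝ, (1 + |x|) ^ (-N) := step3

lemma humpShift (hN : 1 < N) {b : ℝ} (hb : 0 < b) (k : ℝ)
    (hk : ∀ x : ℝ, |Real.sin (x + k)| = |Real.sin x|) :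
    ∫ x in (-(π/2) + k)..((π/2) + k), (1 + b * |Real.sin x|) ^ (-N) ≤
      π / (2*b) * ∫ x : ℝ, (1 + |x|) ^ (-N) := by
  have h := intervalIntegral.integral_comp_add_right
    (a := -(π/2)) (b := π/2) (fun x => (1 + b * |Real.sin x|) ^ (-N)) k
  rw [← h]
  have : (∫ x in (-(π/2))..(π/2), (1 + b * |Real.sin (x + k)|) ^ (-N)) =
      ∫ x in (-(π/2))..(π/2), (1 + b * |Real.sin x|) ^ (-N) := by
    simp_rw [hk]
  rw [this]
  exact hump0 hN hb

lemma bigInterval (hN : 1 < N) {b : ℝ} (hb : 0 < b) :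
    ∫ x in (-(3*π/2))..(3*π/2), (1 + b * |Real.sin x|) ^ (-N) ≤
      3 * (π / (2*b) * ∫ x : ℝ, (1 + |x|) ^ (-N)) := by
  have hπ := pi_pos
  have hcont : Continuous fun x : ℝ => (1 + b * |Real.sin x|) ^ (-N) :=
    contG hb.le continuous_sin
  have hi : ∀ u v : ℝ, IntervalIntegrable
      (fun x : ℝ => (1 + b * |Real.sin x|) ^ (-N)) volume u v :=
    fun u v => hcont.intervalIntegrable u v
  have hkneg : ∀ x : ℝ, |Real.sin (x + -π)| = |Real.sin x| := by
    intro x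
    have : Real.sin (x + -π) = -Real.sin x := by
      simp [Real.sin_add]
    rw [this, abs_neg]
  have hkpos : ∀ x : ℝ, |Real.sin (x + π)| = |Real.sin x| := by
    intro x
    have : Real.sin (x + π) = -Real.sin x := by
      simp [Real.sin_add]
    rw [this, abs_neg]
  have h1 : ∫ x in (-(3*π/2))..(-(π/2)), (1 + b * |Real.sin x|) ^ (-N) ≤
      π / (2*b) * ∫ x : ℝ, (1 + |x|) ^ (-N) := by
    have h := humpShift hN hb (-π) hkneg
    have a1 : (-(π/2) + -π : ℝ) = -(3*π/2) := by ring
    have a2 : ((π/2) + -π : ℝ) = -(π/2) := by ring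
    rwa [a1, a2] at h
  have h2 : ∫ x in (-(π/2))..(π/2), (1 + b * |Real.sin x|) ^ (-N) ≤
      π / (2*b) * ∫ x : ℝ, (1 + |x|) ^ (-N) := hump0 hN hb
  have h3 : ∫ x in ((π/2))..(3*π/2), (1 + b * |Real.sin x|) ^ (-N) ≤
      π / (2*b) * ∫ x : ℝ, (1 + |x|) ^ (-N) := by
    have h := humpShift hN hb π hkpos
    have a1 : (-(π/2) + π : ℝ) = π/2 := by ring
    have a2 : ((π/2) + π : ℝ) = 3*π/2 := by ring
    rwa [a1, a2] at h
  have split1 : (∫ x in (-(3*π/2))..(3*π/2), (1 + b * |Real.sin x|) ^ (-N)) =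
      (∫ x in (-(3*π/2))..(-(π/2)), (1 + b * |Real.sin x|) ^ (-N)) +
      (∫ x in (-(π/2))..(π/2), (1 + b * |Real.sin x|) ^ (-N)) +
      (∫ x in ((π/2))..(3*π/2), (1 + b * |Real.sin x|) ^ (-N)) := by
    rw [intervalIntegral.integral_add_adjacent_intervals (hi _ _) (hi _ _),
      intervalIntegral.integral_add_adjacent_intervals (hi _ _) (hi _ _)]
  rw [split1]
  linarith

lemma shifted (hN : 1 < N) {b : ℝ} (hb : 0 < b) (θ : ℝ) (hθ : |θ| ≤ π/2) :
    ∫ φ in Set.Icc (-π) π, (1 + b * |Real.sin (φ + θ)|) ^ (-N) ≤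
      3 * (π / (2*b) * ∫ x : ℝ, (1 + |x|) ^ (-N)) := by
  have hπ := pi_pos
  have hθ' := abs_le.1 hθ
  rw [MeasureTheory.integral_Icc_eq_integral_Ioc,
    ← intervalIntegral.integral_of_le (by linarith : (-π : ℝ) ≤ π)]
  rw [show (∫ x in (-π)..π, (1 + b * |Real.sin (x + θ)|) ^ (-N)) =
      ∫ x in (-π + θ)..(π + θ), (1 + b * |Real.sin x|) ^ (-N) from
    intervalIntegral.integral_comp_add_right
      (fun x => (1 + b * |Real.sin x|) ^ (-N)) θ]
  have hcont : Continuous fun x : ℝ => (1 + b * |Real.sin x|) ^ (-N) :=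
    contG hb.le continuous_sin
  have hmono : (∫ x in (-π + θ)..(π + θ), (1 + b * |Real.sin x|) ^ (-N)) ≤
      ∫ x in (-(3*π/2))..(3*π/2), (1 + b * |Real.sin x|) ^ (-N) := by
    apply intervalIntegral.integral_mono_interval (by linarith) (by linarith) (by linarith)
    · exact Filter.Eventually.of_forall fun x => Real.rpow_nonneg (by positivity) _
    · exact hcont.intervalIntegrable _ _
  exact hmono.trans (bigInterval hN hb)

lemma arith2 (hN : 1 < N) {x y t : ℝ} (hx : 0 < x) (hy : 0 < y)
    (h1 : 1 ≤ min x y * t) :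
    (1 + x * (t/π)) ^ (-N) * y⁻¹ ≤
      (2*π) ^ N * (max x y)⁻¹ * (1 + min x y * t) ^ (-N) := by
  have hπ := pi_pos
  have hmin : 0 < min x y := lt_min hx hy
  have ht : 0 < t := by nlinarith
  have hNneg : -N ≤ 0 := by linarith
  rcases le_total x y with h | h
  · rw [min_eq_left h] at *
    rw [max_eq_right h]
    have key : 1 + x * t ≤ (2*π) * (1 + x * (t/π)) := by
      have hu : x * (t/π) * π = x * t := by field_simp
      have hu0 : 0 ≤ x * (t/π) := by positivity
      nlinarith [pi_gt_three, mul_nonneg hx.le ht.le]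
    have h2 : ((2*π) * (1 + x * (t/π))) ^ (-N) ≤ (1 + x * t) ^ (-N) :=
      Real.rpow_le_rpow_of_nonpos (by positivity) key hNneg
    have h3 : ((2*π) * (1 + x * (t/π))) ^ (-N) =
        (2*π) ^ (-N) * (1 + x * (t/π)) ^ (-N) :=
      Real.mul_rpow (by positivity) (by positivity)
    have h4 : (1 + x * (t/π)) ^ (-N) ≤ (2*π) ^ N * (1 + x * t) ^ (-N) := by
      have h5 : (2*π) ^ N * ((2*π) ^ (-N) * (1 + x * (t/π)) ^ (-N)) ≤
          (2*π) ^ N * (1 + x * t) ^ (-N) := by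
        apply mul_le_mul_of_nonneg_left _ (Real.rpow_nonneg (by positivity) _)
        rw [← h3]; exact h2
      have h6 : (2*π) ^ N * (2*π) ^ (-N) = 1 := by
        rw [← Real.rpow_add (by positivity)]
        simp
      calc (1 + x * (t/π)) ^ (-N)
          = (2*π) ^ N * (2*π) ^ (-N) * (1 + x * (t/π)) ^ (-N) := by rw [h6]; ring
        _ = (2*π) ^ N * ((2*π) ^ (-N) * (1 + x * (t/π)) ^ (-N)) := by ring
        _ ≤ (2*π) ^ N * (1 + x * t) ^ (-N) := h5
    calc (1 + x * (t/π)) ^ (-N) * y⁻¹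
        ≤ ((2*π) ^ N * (1 + x * t) ^ (-N)) * y⁻¹ :=
          mul_le_mul_of_nonneg_right h4 (by positivity)
      _ = (2*π) ^ N * y⁻¹ * (1 + x * t) ^ (-N) := by ring
  · rw [min_eq_right h] at *
    rw [max_eq_left h]
    -- goal : (1 + x*(t/π))^(-N) * y⁻¹ ≤ (2π)^N * x⁻¹ * (1+y*t)^(-N)
    have hL1 : (1 + x * (t/π)) ^ (-N) ≤ (x * (t/π)) ^ (-N) :=
      Real.rpow_le_rpow_of_nonpos (by positivity) (by linarith) hNneg
    have hR1 : (2*y*t) ^ (-N) ≤ (1 + y * t) ^ (-N) :=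
      Real.rpow_le_rpow_of_nonpos (by positivity) (by nlinarith) hNneg
    have key : y ^ (N-1) ≤ x ^ (N-1) := Real.rpow_le_rpow hy.le h (by linarith)
    have ex : x ^ N = x ^ (N-1) * x := by
      rw [← Real.rpow_add_one hx.ne' (N-1)]; norm_num
    have ey : y ^ N = y ^ (N-1) * y := by
      rw [← Real.rpow_add_one hy.ne' (N-1)]; norm_num
    have hxyN : x * y ^ N ≤ x ^ N * y := by
      rw [ex, ey]
      nlinarith [mul_le_mul_of_nonneg_left key (by positivity : (0:ℝ) ≤ x * y),
        Real.rpow_pos_of_pos hy (N-1), Real.rpow_pos_of_pos hx (N-1)]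
    have hinv : (x ^ N * y)⁻¹ ≤ (x * y ^ N)⁻¹ := by
      apply inv_anti₀ (by positivity) hxyN
    -- compute both sides explicitly
    have hxN := Real.rpow_pos_of_pos hx N
    have hyN := Real.rpow_pos_of_pos hy N
    have htN := Real.rpow_pos_of_pos ht N
    have hπN := Real.rpow_pos_of_pos hπ N
    have h2Np := Real.rpow_pos_of_pos (by norm_num : (0:ℝ) < 2) N
    have hLeq : (x * (t/π)) ^ (-N) * y⁻¹ =
        π ^ N * ((x ^ N * y)⁻¹ * t ^ (-N)) := by
      rw [Real.rpow_neg (by positivity), Real.rpow_neg ht.le,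
        Real.mul_rpow hx.le (by positivity), Real.div_rpow ht.le hπ.le]
      field_simp
    have hReq : (2*π) ^ N * x⁻¹ * (2*y*t) ^ (-N) =
        π ^ N * ((x * y ^ N)⁻¹ * t ^ (-N)) := by
      rw [Real.rpow_neg (by positivity : (0:ℝ) ≤ 2*y*t), Real.rpow_neg ht.le,
        Real.mul_rpow (by positivity : (0:ℝ) ≤ 2*y) ht.le,
        Real.mul_rpow (by norm_num : (0:ℝ) ≤ 2) hy.le,
        Real.mul_rpow (by norm_num : (0:ℝ) ≤ 2) hπ.le]
      field_simp
    calc (1 + x * (t/π)) ^ (-N) * y⁻¹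
        ≤ (x * (t/π)) ^ (-N) * y⁻¹ :=
          mul_le_mul_of_nonneg_right hL1 (by positivity)
      _ = π ^ N * ((x ^ N * y)⁻¹ * t ^ (-N)) := hLeq
      _ ≤ π ^ N * ((x * y ^ N)⁻¹ * t ^ (-N)) := by
          apply mul_le_mul_of_nonneg_left _ (by positivity)
          exact mul_le_mul_of_nonneg_right hinv (Real.rpow_nonneg ht.le _)
      _ = (2*π) ^ N * x⁻¹ * (2*y*t) ^ (-N) := hReq.symm
      _ ≤ (2*π) ^ N * x⁻¹ * (1 + y*t) ^ (-N) := by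
          apply mul_le_mul_of_nonneg_left hR1 (by positivity)

end Stmt6Aux

open Stmt6Aux

set_option maxHeartbeats 1000000

/-- angular version of the decay estimate. For every `N > 1` there is
`C > 0` depending only on `N` such that for all `a, a' > 0` and `|θ| ≤ π/2`,
`∫_{-π}^{π} (1 + a|sin φ|)^{-N} (1 + a'|sin(φ+θ)|)^{-N} dφ
   ≤ C · max{a,a'}⁻¹ · (1 + min{a,a'}|θ|)^{-N}`. -/
theorem stmt6 (N : ℝ) (hN : 1 < N) :
    ∃ C > (0 : ℝ), ∀ a a' : ℝ, 0 < a → 0 < a' → ∀ θ : ℝ, |θ| ≤ π / 2 →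
      (∫ φ in Set.Icc (-π) π,
          (1 + a * |Real.sin φ|) ^ (-N) * (1 + a' * |Real.sin (φ + θ)|) ^ (-N))
        ≤ C * (max a a')⁻¹ * (1 + min a a' * |θ|) ^ (-N) := by
  have hπ := pi_pos
  set I : ℝ := ∫ x : ℝ, (1 + |x|) ^ (-N) with hIdef
  have hI : 0 < I := Ipos hN
  set J : ℝ := 3 * (π/2 * I) with hJdef
  have hJ : 0 < J := by positivity
  refine ⟨((2:ℝ) ^ N + 2 * (2*π) ^ N) * J, by positivity, ?_⟩
  intro a a' ha ha' θ hθ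
  set t : ℝ := |θ| with htdef
  have ht0 : 0 ≤ t := abs_nonneg θ
  set m : ℝ := min a a' with hmdef
  set M : ℝ := max a a' with hMdef
  have hm : 0 < m := lt_min ha ha'
  have hM : 0 < M := lt_of_lt_of_le hm min_le_max
  have hNneg : -N ≤ 0 := by linarith
  -- continuity and integrability facts
  have hcontA : Continuous fun φ : ℝ => (1 + a * |Real.sin φ|) ^ (-N) :=
    contG ha.le continuous_sin
  have hcontB : Continuous fun φ : ℝ => (1 + a' * |Real.sin (φ + θ)|) ^ (-N) :=
    contG ha'.le (by fun_prop)
  have hiA : IntegrableOn (fun φ : ℝ => (1 + a * |Real.sin φ|) ^ (-N))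
      (Set.Icc (-π) π) := hcontA.integrableOn_Icc
  have hiB : IntegrableOn (fun φ : ℝ => (1 + a' * |Real.sin (φ + θ)|) ^ (-N))
      (Set.Icc (-π) π) := hcontB.integrableOn_Icc
  have hiP : IntegrableOn (fun φ : ℝ =>
      (1 + a * |Real.sin φ|) ^ (-N) * (1 + a' * |Real.sin (φ + θ)|) ^ (-N))
      (Set.Icc (-π) π) := (hcontA.mul hcontB).integrableOn_Icc
  -- single factor bounds
  have hB2 : ∫ φ in Set.Icc (-π) π, (1 + a' * |Real.sin (φ + θ)|) ^ (-N) ≤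
      3 * (π / (2*a') * I) := shifted hN ha' θ hθ
  have hB1 : ∫ φ in Set.Icc (-π) π, (1 + a * |Real.sin φ|) ^ (-N) ≤
      3 * (π / (2*a) * I) := by
    have := shifted hN ha 0 (by rw [abs_zero]; positivity)
    simpa using this
  -- pointwise positivity facts
  have hA0 : ∀ φ : ℝ, 0 ≤ (1 + a * |Real.sin φ|) ^ (-N) :=
    fun φ => Real.rpow_nonneg (by positivity) _
  have hB0 : ∀ φ : ℝ, 0 ≤ (1 + a' * |Real.sin (φ + θ)|) ^ (-N) :=
    fun φ => Real.rpow_nonneg (by positivity) _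
  have hA1 : ∀ φ : ℝ, (1 + a * |Real.sin φ|) ^ (-N) ≤ 1 :=
    fun φ => Real.rpow_le_one_of_one_le_of_nonpos
      (by nlinarith [abs_nonneg (Real.sin φ)]) hNneg
  have hB1' : ∀ φ : ℝ, (1 + a' * |Real.sin (φ + θ)|) ^ (-N) ≤ 1 :=
    fun φ => Real.rpow_le_one_of_one_le_of_nonpos
      (by nlinarith [abs_nonneg (Real.sin (φ + θ))]) hNneg
  have hfrac : ∀ b : ℝ, 0 < b → 3 * (π / (2*b) * I) = J * b⁻¹ := by
    intro b hb
    rw [hJdef]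
    field_simp
  rcases le_or_gt (m * t) 1 with hcase | hcase
  · -- Case 1 : m * t ≤ 1
    have h2N : (2:ℝ) ^ (-N) ≤ (1 + m * t) ^ (-N) :=
      Real.rpow_le_rpow_of_nonpos (by positivity) (by linarith) hNneg
    have hmain : (∫ φ in Set.Icc (-π) π,
        (1 + a * |Real.sin φ|) ^ (-N) * (1 + a' * |Real.sin (φ + θ)|) ^ (-N))
        ≤ J * M⁻¹ := by
      rcases le_total a a' with h | h
      · have hMeq : M = a' := max_eq_right h
        have hpt : ∀ φ ∈ Set.Icc (-π) π,
            (1 + a * |Real.sin φ|) ^ (-N) * (1 + a' * |Real.sin (φ + θ)|) ^ (-N) ≤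
            (1 + a' * |Real.sin (φ + θ)|) ^ (-N) := by
          intro φ _
          calc (1 + a * |Real.sin φ|) ^ (-N) * (1 + a' * |Real.sin (φ + θ)|) ^ (-N)
              ≤ 1 * (1 + a' * |Real.sin (φ + θ)|) ^ (-N) :=
                mul_le_mul_of_nonneg_right (hA1 φ) (hB0 φ)
            _ = (1 + a' * |Real.sin (φ + θ)|) ^ (-N) := one_mul _
        calc (∫ φ in Set.Icc (-π) π,
            (1 + a * |Real.sin φ|) ^ (-N) * (1 + a' * |Real.sin (φ + θ)|) ^ (-N))
            ≤ ∫ φ in Set.Icc (-π) π, (1 + a' * |Real.sin (φ + θ)|) ^ (-N) :=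
              setIntegral_mono_on hiP hiB measurableSet_Icc hpt
          _ ≤ 3 * (π / (2*a') * I) := hB2
          _ = J * M⁻¹ := by rw [hfrac a' ha', hMeq]
      · have hMeq : M = a := max_eq_left h
        have hpt : ∀ φ ∈ Set.Icc (-π) π,
            (1 + a * |Real.sin φ|) ^ (-N) * (1 + a' * |Real.sin (φ + θ)|) ^ (-N) ≤
            (1 + a * |Real.sin φ|) ^ (-N) := by
          intro φ _
          exact mul_le_of_le_one_right (hA0 φ) (hB1' φ)
        calc (∫ φ in Set.Icc (-π) π,
            (1 + a * |Real.sin φ|) ^ (-N) * (1 + a' * |Real.sin (φ + θ)|) ^ (-N))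
            ≤ ∫ φ in Set.Icc (-π) π, (1 + a * |Real.sin φ|) ^ (-N) :=
              setIntegral_mono_on hiP hiA measurableSet_Icc hpt
          _ ≤ 3 * (π / (2*a) * I) := hB1
          _ = J * M⁻¹ := by rw [hfrac a ha, hMeq]
    have hfin : J * M⁻¹ ≤ ((2:ℝ) ^ N + 2 * (2*π) ^ N) * J * M⁻¹ * (1 + m * t) ^ (-N) := by
      have e1 : (2:ℝ) ^ N * (2:ℝ) ^ (-N) = 1 := by
        rw [← Real.rpow_add two_pos]; simp
      have h5 : (2:ℝ) ^ N * J * M⁻¹ * (2:ℝ) ^ (-N) ≤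
          ((2:ℝ) ^ N + 2 * (2*π) ^ N) * J * M⁻¹ * (1 + m * t) ^ (-N) := by
        have hle1 : (2:ℝ) ^ N * J * M⁻¹ * (2:ℝ) ^ (-N) ≤
            (2:ℝ) ^ N * J * M⁻¹ * (1 + m * t) ^ (-N) :=
          mul_le_mul_of_nonneg_left h2N (by positivity)
        have hle2 : (2:ℝ) ^ N * J * M⁻¹ * (1 + m * t) ^ (-N) ≤
            ((2:ℝ) ^ N + 2 * (2*π) ^ N) * J * M⁻¹ * (1 + m * t) ^ (-N) := by
          apply mul_le_mul_of_nonneg_right _ (Real.rpow_nonneg (by positivity) _)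
          have : (0:ℝ) ≤ 2 * (2*π) ^ N * J * M⁻¹ := by positivity
          nlinarith
        linarith
      calc J * M⁻¹ = (2:ℝ) ^ N * J * M⁻¹ * (2:ℝ) ^ (-N) := by
            rw [show (2:ℝ) ^ N * J * M⁻¹ * (2:ℝ) ^ (-N) =
              ((2:ℝ) ^ N * (2:ℝ) ^ (-N)) * (J * M⁻¹) by ring, e1, one_mul]
        _ ≤ _ := h5
    exact hmain.trans hfin
  · -- Case 2 : 1 < m * t
    have hsum : ∀ φ : ℝ, 2 * (t/π) ≤ |Real.sin φ| + |Real.sin (φ + θ)| := by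
      intro φ
      have h1 : 2/π * t ≤ |Real.sin θ| := mul_abs_le_abs_sin hθ
      have e : Real.sin θ = Real.sin (φ + θ) * Real.cos φ -
          Real.cos (φ + θ) * Real.sin φ := by
        rw [← Real.sin_sub]
        norm_num
      have h2 : |Real.sin θ| ≤ |Real.sin (φ + θ)| + |Real.sin φ| := by
        rw [e]
        calc |Real.sin (φ + θ) * Real.cos φ - Real.cos (φ + θ) * Real.sin φ|
            ≤ |Real.sin (φ + θ) * Real.cos φ| + |Real.cos (φ + θ) * Real.sin φ| :=
              abs_sub _ _
          _ ≤ |Real.sin (φ + θ)| + |Real.sin φ| := by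
              rw [abs_mul, abs_mul]
              have c1 := Real.abs_cos_le_one φ
              have c2 := Real.abs_cos_le_one (φ + θ)
              have s1 := abs_nonneg (Real.sin (φ + θ))
              have s2 := abs_nonneg (Real.sin φ)
              nlinarith
      have : 2 * (t/π) = 2/π * t := by ring
      linarith
    set c1 : ℝ := (1 + a * (t/π)) ^ (-N) with hc1
    set c2 : ℝ := (1 + a' * (t/π)) ^ (-N) with hc2
    have hc10 : 0 ≤ c1 := Real.rpow_nonneg (by positivity) _
    have hc20 : 0 ≤ c2 := Real.rpow_nonneg (by positivity) _
    have hpt : ∀ φ ∈ Set.Icc (-π) π,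
        (1 + a * |Real.sin φ|) ^ (-N) * (1 + a' * |Real.sin (φ + θ)|) ^ (-N) ≤
        c1 * (1 + a' * |Real.sin (φ + θ)|) ^ (-N) +
        c2 * (1 + a * |Real.sin φ|) ^ (-N) := by
      intro φ _
      rcases le_or_gt (t/π) |Real.sin φ| with h | h
      · have hAle : (1 + a * |Real.sin φ|) ^ (-N) ≤ c1 := by
          apply Real.rpow_le_rpow_of_nonpos (by positivity) _ hNneg
          nlinarith
        have : (1 + a * |Real.sin φ|) ^ (-N) * (1 + a' * |Real.sin (φ + θ)|) ^ (-N) ≤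
            c1 * (1 + a' * |Real.sin (φ + θ)|) ^ (-N) :=
          mul_le_mul_of_nonneg_right hAle (hB0 φ)
        nlinarith [mul_nonneg hc20 (hA0 φ)]
      · have hsin : t/π ≤ |Real.sin (φ + θ)| := by
          have := hsum φ
          linarith
        have hBle : (1 + a' * |Real.sin (φ + θ)|) ^ (-N) ≤ c2 := by
          apply Real.rpow_le_rpow_of_nonpos (by positivity) _ hNneg
          nlinarith
        have : (1 + a * |Real.sin φ|) ^ (-N) * (1 + a' * |Real.sin (φ + θ)|) ^ (-N) ≤
            (1 + a * |Real.sin φ|) ^ (-N) * c2 :=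
          mul_le_mul_of_nonneg_left hBle (hA0 φ)
        nlinarith [mul_nonneg hc10 (hB0 φ)]
    have hintRHS : IntegrableOn (fun φ : ℝ =>
        c1 * (1 + a' * |Real.sin (φ + θ)|) ^ (-N) +
        c2 * (1 + a * |Real.sin φ|) ^ (-N)) (Set.Icc (-π) π) :=
      (hiB.const_mul c1).add (hiA.const_mul c2)
    have hstep : (∫ φ in Set.Icc (-π) π,
        (1 + a * |Real.sin φ|) ^ (-N) * (1 + a' * |Real.sin (φ + θ)|) ^ (-N))
        ≤ c1 * (J * a'⁻¹) + c2 * (J * a⁻¹) := by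
      calc (∫ φ in Set.Icc (-π) π,
          (1 + a * |Real.sin φ|) ^ (-N) * (1 + a' * |Real.sin (φ + θ)|) ^ (-N))
          ≤ ∫ φ in Set.Icc (-π) π,
            (c1 * (1 + a' * |Real.sin (φ + θ)|) ^ (-N) +
             c2 * (1 + a * |Real.sin φ|) ^ (-N)) :=
            setIntegral_mono_on hiP hintRHS measurableSet_Icc hpt
        _ = c1 * (∫ φ in Set.Icc (-π) π, (1 + a' * |Real.sin (φ + θ)|) ^ (-N)) +
            c2 * (∫ φ in Set.Icc (-π) π, (1 + a * |Real.sin φ|) ^ (-N)) := by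
            rw [integral_add (hiB.const_mul c1) (hiA.const_mul c2),
              MeasureTheory.integral_const_mul, MeasureTheory.integral_const_mul]
        _ ≤ c1 * (3 * (π / (2*a') * I)) + c2 * (3 * (π / (2*a) * I)) := by
            have g1 := mul_le_mul_of_nonneg_left hB2 hc10
            have g2 := mul_le_mul_of_nonneg_left hB1 hc20
            linarith
        _ = c1 * (J * a'⁻¹) + c2 * (J * a⁻¹) := by
            rw [hfrac a' ha', hfrac a ha]
    have hcase1 : 1 ≤ min a a' * t := by rw [← hmdef]; exact hcase.le
    have harith1 : c1 * a'⁻¹ ≤ (2*π) ^ N * M⁻¹ * (1 + m * t) ^ (-N) := by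
      have h := arith2 hN ha ha' hcase1
      rw [← hmdef, ← hMdef, ← hc1] at h
      exact h
    have harith2 : c2 * a⁻¹ ≤ (2*π) ^ N * M⁻¹ * (1 + m * t) ^ (-N) := by
      have hcase' : 1 ≤ min a' a * t := by rw [min_comm]; exact hcase1
      have hh := arith2 hN ha' ha hcase'
      rw [min_comm a' a, max_comm a' a] at hh
      rw [← hmdef, ← hMdef, ← hc2] at hh
      exact hh
    calc (∫ φ in Set.Icc (-π) π,
        (1 + a * |Real.sin φ|) ^ (-N) * (1 + a' * |Real.sin (φ + θ)|) ^ (-N))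
        ≤ c1 * (J * a'⁻¹) + c2 * (J * a⁻¹) := hstep
      _ = J * (c1 * a'⁻¹) + J * (c2 * a⁻¹) := by ring
      _ ≤ J * ((2*π) ^ N * M⁻¹ * (1 + m * t) ^ (-N)) +
          J * ((2*π) ^ N * M⁻¹ * (1 + m * t) ^ (-N)) := by
          have g1 := mul_le_mul_of_nonneg_left harith1 hJ.le
          have g2 := mul_le_mul_of_nonneg_left harith2 hJ.le
          linarith
      _ ≤ ((2:ℝ) ^ N + 2 * (2*π) ^ N) * J * M⁻¹ * (1 + m * t) ^ (-N) := by
          have hnn : (0:ℝ) ≤ (2:ℝ) ^ N * J * M⁻¹ * (1 + m * t) ^ (-N) := by positivity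
          nlinarith [Real.rpow_nonneg (by positivity : (0:ℝ) ≤ 1 + m * t) (-N)]

end
end

section
/- Let α ∈ [0,1] and let M, N₁, N₂, K be nonnegative reals with K ≤ N₂ and K ≤ M. Then there exists a constant C > 0, depending only on K, such that for all s > 0, r ≥ 0 and all φ, θ ∈ ℝ: min{1, s^{−1}(1+r)}^M · (1 + s^{−1}r)^{−N₁} · (1 + s^{−α} r |sin(φ + θ)|)^{−N₂} ≤ C · min{1, s^{−1}(1+r)}^{M−K} · (1 + s^{1−α}|sin(φ + θ)|)^{−K} · (1 + s^{−1}r)^{−N₁}. -/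
open Real Set

noncomputable section

/-- decoupling of the angular and radial variables: for every `K ≥ 0`
there exists `C > 0` depending only on `K` such that for all `α ∈ [0,1]`, all nonnegative
reals `M, N₁, N₂` with `K ≤ N₂` and `K ≤ M`, all `s > 0`, `r ≥ 0` and all angles `φ, θ`:
`min{1, s⁻¹(1+r)}^M (1+s⁻¹r)^{-N₁} (1+s^{-α} r |sin(φ+θ)|)^{-N₂}
  ≤ C · min{1, s⁻¹(1+r)}^{M-K} (1+s^{1-α}|sin(φ+θ)|)^{-K} (1+s⁻¹r)^{-N₁}`. -/
theorem stmt7 (K : ℝ) (hK : 0 ≤ K) :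
    ∃ C > (0 : ℝ), ∀ α ∈ Set.Icc (0 : ℝ) 1, ∀ M N₁ N₂ : ℝ,
      0 ≤ M → 0 ≤ N₁ → 0 ≤ N₂ → K ≤ N₂ → K ≤ M →
      ∀ s r φ θ : ℝ, 0 < s → 0 ≤ r →
        (min 1 (s⁻¹ * (1 + r))) ^ M * (1 + s⁻¹ * r) ^ (-N₁)
            * (1 + s ^ (-α) * r * |Real.sin (φ + θ)|) ^ (-N₂)
          ≤ C * (min 1 (s⁻¹ * (1 + r))) ^ (M - K)
            * (1 + s ^ (1 - α) * |Real.sin (φ + θ)|) ^ (-K) * (1 + s⁻¹ * r) ^ (-N₁) := by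
  refine ⟨2 ^ K, by positivity, ?_⟩
  rintro α ⟨hα0, hα1⟩ M N₁ N₂ hM hN₁ hN₂ hKN₂ hKM s r φ θ hs hr
  set u := |Real.sin (φ + θ)| with hu
  have hu0 : 0 ≤ u := abs_nonneg _
  have hu1 : u ≤ 1 := abs_sin_le_one _
  set m := min 1 (s⁻¹ * (1 + r)) with hmdef
  have hm0 : 0 < m := lt_min one_pos (by positivity)
  have hm1 : m ≤ 1 := min_le_left _ _
  set X := 1 + s ^ (-α) * r * u with hX
  set Y := 1 + s ^ (1 - α) * u with hY
  have hsa : 0 ≤ s ^ (-α) := Real.rpow_nonneg hs.le _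
  have hsb : 0 ≤ s ^ (1 - α) := Real.rpow_nonneg hs.le _
  have hX1 : 1 ≤ X := by nlinarith [mul_nonneg (mul_nonneg hsa hr) hu0]
  have hY1 : 1 ≤ Y := by nlinarith [mul_nonneg hsb hu0]
  have hX0 : 0 < X := lt_of_lt_of_le one_pos hX1
  have hY0 : 0 < Y := lt_of_lt_of_le one_pos hY1
  have key : m * Y ≤ 2 * X := by
    rcases le_or_gt s 1 with h | h
    · have h1 : s ^ (1 - α) ≤ 1 := Real.rpow_le_one hs.le h (by linarith)
      nlinarith [mul_nonneg (mul_nonneg hsa hr) hu0, mul_nonneg hsb hu0]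
    · have h1 : s ^ (-α) ≤ 1 :=
        Real.rpow_le_one_of_one_le_of_nonpos h.le (by linarith)
      have hms : m ≤ s⁻¹ * (1 + r) := min_le_right _ _
      have hss : s⁻¹ * s ^ (1 - α) = s ^ (-α) := by
        rw [← Real.rpow_neg_one s, ← Real.rpow_add hs]
        congr 1; ring
      have hmu : m * (s ^ (1 - α) * u) ≤ s ^ (-α) * u + s ^ (-α) * (r * u) := by
        have : m * (s ^ (1 - α) * u) ≤ (s⁻¹ * (1 + r)) * (s ^ (1 - α) * u) := by
          apply mul_le_mul_of_nonneg_right hms (by positivity)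
        calc m * (s ^ (1 - α) * u) ≤ (s⁻¹ * (1 + r)) * (s ^ (1 - α) * u) := this
          _ = (s⁻¹ * s ^ (1 - α)) * ((1 + r) * u) := by ring
          _ = s ^ (-α) * u + s ^ (-α) * (r * u) := by rw [hss]; ring
      nlinarith [mul_nonneg hsa hu0, mul_nonneg hsa (mul_nonneg hr hu0)]
  have h1 : m ^ K * Y ^ K ≤ 2 ^ K * X ^ K := by
    have := Real.rpow_le_rpow (by positivity) key hK
    rwa [Real.mul_rpow hm0.le hY0.le, Real.mul_rpow (by norm_num) hX0.le] at this
  have h2 : m ^ K * X ^ (-N₂) ≤ 2 ^ K * Y ^ (-K) := by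
    have hXN : X ^ (-N₂) ≤ X ^ (-K) :=
      Real.rpow_le_rpow_of_exponent_le hX1 (by linarith)
    have h3 : m ^ K * X ^ (-K) ≤ 2 ^ K * Y ^ (-K) := by
      rw [Real.rpow_neg hX0.le, Real.rpow_neg hY0.le, ← div_eq_mul_inv, ← div_eq_mul_inv,
        div_le_div_iff₀ (by positivity) (by positivity)]
      nlinarith
    calc m ^ K * X ^ (-N₂) ≤ m ^ K * X ^ (-K) :=
          mul_le_mul_of_nonneg_left hXN (by positivity)
      _ ≤ 2 ^ K * Y ^ (-K) := h3
  have hA : (0:ℝ) ≤ (1 + s⁻¹ * r) ^ (-N₁) := Real.rpow_nonneg (by positivity) _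
  calc m ^ M * (1 + s⁻¹ * r) ^ (-N₁) * X ^ (-N₂)
      = (m ^ (M - K) * (1 + s⁻¹ * r) ^ (-N₁)) * (m ^ K * X ^ (-N₂)) := by
        rw [show M = M - K + K by ring, Real.rpow_add hm0]; ring_nf
    _ ≤ (m ^ (M - K) * (1 + s⁻¹ * r) ^ (-N₁)) * (2 ^ K * Y ^ (-K)) := by
        apply mul_le_mul_of_nonneg_left h2 (by positivity)
    _ = 2 ^ K * m ^ (M - K) * Y ^ (-K) * (1 + s⁻¹ * r) ^ (-N₁) := by ring

end
end

section
/- Let α ∈ [0,1], c > 0, A ≥ 1, and let M, N₁ be reals with N₁ ≥ A + (1+α)/2 and M > N₁ − 2. Then there exists a constant C > 0, depending only on α, c, A, M, N₁, such that for all s_μ ≥ s_λ ≥ c: s_μ^{−2} ∫_0^∞ min{1, s_λ^{−1}(1+r)}^M · min{1, s_μ^{−1}(1+r)}^M · (1 + s_λ^{−1}r)^{−N₁} · (1 + s_μ^{−1}r)^{−N₁} · r dr ≤ C · (s_μ/s_λ)^{−(A + (1+α)/2)}. -/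
open MeasureTheory Real Set

noncomputable section

private lemma auxA1 {x B M : ℝ} (hx : 0 < x) (hxB : x ≤ B) (hB1 : 1 ≤ B) :
    min 1 x ^ M ≤ B ^ |M| * x ^ M := by
  have hB0 : (0:ℝ) < B := lt_of_lt_of_le one_pos hB1
  have hK1 : (1:ℝ) ≤ B ^ |M| := Real.one_le_rpow hB1 (abs_nonneg M)
  rcases le_total x 1 with h1 | h1
  · rw [min_eq_right h1]
    exact le_mul_of_one_le_left (Real.rpow_nonneg hx.le M) hK1
  · rw [min_eq_left h1, Real.one_rpow]
    rcases le_total 0 M with hM | hM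
    · rw [abs_of_nonneg hM]
      have h2 : (1:ℝ) ≤ B ^ M := Real.one_le_rpow hB1 hM
      have h3 : (1:ℝ) ≤ x ^ M := Real.one_le_rpow h1 hM
      nlinarith
    · rw [abs_of_nonpos hM]
      have h2 : x ^ (-M) ≤ B ^ (-M) := Real.rpow_le_rpow hx.le hxB (by linarith)
      have h3 : x ^ (-M) * x ^ M = 1 := by
        rw [← Real.rpow_add hx]; simp
      have h4 : (0:ℝ) ≤ x ^ M := Real.rpow_nonneg hx.le M
      nlinarith

private lemma auxA2 {x y B M : ℝ} (hy : 0 < y) (hy1 : y ≤ 1) (hyx : y ≤ x)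
    (hxB : x ≤ B * y) (hB1 : 1 ≤ B) : min 1 x ^ M ≤ B ^ |M| * y ^ M := by
  have hB0 : (0:ℝ) < B := lt_of_lt_of_le one_pos hB1
  rcases le_total 0 M with hM | hM
  · rw [abs_of_nonneg hM, ← Real.mul_rpow hB0.le hy.le]
    refine Real.rpow_le_rpow (le_min zero_le_one (hy.trans_le hyx).le) ?_ hM
    exact le_trans (min_le_right _ _) hxB
  · rw [abs_of_nonpos hM]
    have h1 : y ≤ min 1 x := le_min hy1 hyx
    have h2 : min 1 x ^ M ≤ y ^ M := Real.rpow_le_rpow_of_nonpos hy h1 hM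
    have h3 : (1:ℝ) ≤ B ^ (-M) := Real.one_le_rpow hB1 (by linarith)
    have h4 : (0:ℝ) ≤ y ^ M := Real.rpow_nonneg hy.le M
    nlinarith

set_option maxHeartbeats 1000000 in
/-- radial estimate: let `α ∈ [0,1]`, `c > 0`, `A ≥ 1`, and reals
`M, N₁` with `N₁ ≥ A + (1+α)/2` and `M > N₁ − 2`. Then there is `C > 0` depending only on
`α, c, A, M, N₁` such that for all `s_μ ≥ s_λ ≥ c`:
`s_μ^{-2} ∫₀^∞ min{1, s_λ^{-1}(1+r)}^M min{1, s_μ^{-1}(1+r)}^M (1+s_λ^{-1}r)^{-N₁}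
  (1+s_μ^{-1}r)^{-N₁} r dr ≤ C (s_μ/s_λ)^{-(A+(1+α)/2)}`. -/
theorem stmt9 (α c A M N₁ : ℝ) (hα : α ∈ Set.Icc (0 : ℝ) 1) (hc : 0 < c) (hA : 1 ≤ A)
    (hN₁ : A + (1 + α) / 2 ≤ N₁) (hM : N₁ - 2 < M) :
    ∃ C > (0 : ℝ), ∀ sl sm : ℝ, c ≤ sl → sl ≤ sm →
      sm ^ (-2 : ℝ) *
          (∫ r in Set.Ioi (0 : ℝ),
            (min 1 (sl⁻¹ * (1 + r))) ^ M * (min 1 (sm⁻¹ * (1 + r))) ^ M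
              * (1 + sl⁻¹ * r) ^ (-N₁) * (1 + sm⁻¹ * r) ^ (-N₁) * r)
        ≤ C * (sm / sl) ^ (-(A + (1 + α) / 2)) := by
  obtain ⟨hα0, hα1⟩ := hα
  set β : ℝ := A + (1 + α) / 2 with hβdef
  clear_value β
  have hβ2 : (3:ℝ)/2 ≤ β := by rw [hβdef]; linarith
  have hβN : β ≤ N₁ := hN₁
  have hβM : β ≤ M + 2 := by linarith
  have hM2 : (0:ℝ) < 2*M + 1 := by linarith
  have hN1 : (1:ℝ) < N₁ := by linarith
  have hMN : (0:ℝ) < M + 2 - N₁ := by linarith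
  have hc1 : (0:ℝ) < 1/c := by positivity
  set B : ℝ := 1 + 1/c with hBdef
  clear_value B
  have hB1 : (1:ℝ) ≤ B := by rw [hBdef]; linarith
  have hB0 : (0:ℝ) < B := lt_of_lt_of_le one_pos hB1
  set K : ℝ := B ^ |M| with hKdef
  clear_value K
  have hK1 : (1:ℝ) ≤ K := by rw [hKdef]; exact Real.one_le_rpow hB1 (abs_nonneg M)
  have hK0 : (0:ℝ) < K := lt_of_lt_of_le one_pos hK1
  have hBM : (0:ℝ) < B ^ (2*M+1) := Real.rpow_pos_of_pos hB0 _
  refine ⟨K^2 * B^(2*M+1) + K / (M+2-N₁) + 1/(2*N₁-2), ?_, ?_⟩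
  · have h1 : (0:ℝ) < K^2 * B^(2*M+1) := mul_pos (pow_pos hK0 2) hBM
    have h2 : (0:ℝ) < K/(M+2-N₁) := div_pos hK0 hMN
    have h3 : (0:ℝ) < 1/(2*N₁-2) := by
      apply div_pos one_pos; linarith
    linarith
  intro sl sm hcsl hslsm
  have hsl : (0:ℝ) < sl := lt_of_lt_of_le hc hcsl
  have hsm : (0:ℝ) < sm := lt_of_lt_of_le hsl hslsm
  have hslB : 1 + sl ≤ B * sl := by
    have h : 1 ≤ sl / c := (one_le_div hc).2 hcsl
    have hBs : B * sl = sl + sl/c := by rw [hBdef]; ring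
    linarith
  have hsmB : 1 + sm ≤ B * sm := by
    have h : 1 ≤ sm / c := (one_le_div hc).2 (hcsl.trans hslsm)
    have hBs : B * sm = sm + sm/c := by rw [hBdef]; ring
    linarith
  set f : ℝ → ℝ := fun r =>
    (min 1 (sl⁻¹ * (1 + r))) ^ M * (min 1 (sm⁻¹ * (1 + r))) ^ M
      * (1 + sl⁻¹ * r) ^ (-N₁) * (1 + sm⁻¹ * r) ^ (-N₁) * r with hfdef
  set D1 : ℝ := K^2 * B^(2*M+1) * sl^(2*M+1) * sl^(-M) * sm^(-M) with hD1def
  set D2 : ℝ := K * sl^N₁ * sm^(-M) with hD2def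
  set D3 : ℝ := sl^N₁ * sm^N₁ with hD3def
  set g : ℝ → ℝ := fun r =>
    if r ≤ sl then D1 else if r ≤ sm then D2 * r ^ (M+1-N₁) else D3 * r ^ (1-2*N₁)
    with hgdef
  clear_value f g D1 D2 D3
  have he : (-1:ℝ) < M+1-N₁ := by linarith
  have ha : (1-2*N₁ : ℝ) < -1 := by linarith
  -- nonnegativity of f on Ioi 0
  have hnn : ∀ r ∈ Ioi (0:ℝ), 0 ≤ f r := by
    intro r hr
    have hr0 : (0:ℝ) < r := hr
    have h1r : (0:ℝ) < 1 + r := by linarith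
    have h1 : (0:ℝ) ≤ min 1 (sl⁻¹ * (1+r)) ^ M :=
      Real.rpow_nonneg (le_min zero_le_one (mul_nonneg (inv_nonneg.2 hsl.le) h1r.le)) M
    have h2 : (0:ℝ) ≤ min 1 (sm⁻¹ * (1+r)) ^ M :=
      Real.rpow_nonneg (le_min zero_le_one (mul_nonneg (inv_nonneg.2 hsm.le) h1r.le)) M
    have h3 : (0:ℝ) ≤ (1 + sl⁻¹ * r) ^ (-N₁) :=
      Real.rpow_nonneg (by positivity) _
    have h4 : (0:ℝ) ≤ (1 + sm⁻¹ * r) ^ (-N₁) :=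
      Real.rpow_nonneg (by positivity) _
    simp only [hfdef]
    exact mul_nonneg (mul_nonneg (mul_nonneg (mul_nonneg h1 h2) h3) h4) hr0.le
  -- pointwise bound
  have hfg : ∀ r ∈ Ioi (0:ℝ), f r ≤ g r := by
    intro r hr
    have hr0 : (0:ℝ) < r := hr
    have h1r : (0:ℝ) < 1 + r := by linarith
    have hxl0 : (0:ℝ) < sl⁻¹ * (1+r) := mul_pos (inv_pos.2 hsl) h1r
    have hxm0 : (0:ℝ) < sm⁻¹ * (1+r) := mul_pos (inv_pos.2 hsm) h1r
    have hQ1 : (0:ℝ) ≤ (1 + sl⁻¹ * r) ^ (-N₁) := Real.rpow_nonneg (by positivity) _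
    have hQ2 : (0:ℝ) ≤ (1 + sm⁻¹ * r) ^ (-N₁) := Real.rpow_nonneg (by positivity) _
    have hdl : (1 + sl⁻¹ * r) ^ (-N₁) ≤ 1 := by
      apply Real.rpow_le_one_of_one_le_of_nonpos
      · have : (0:ℝ) ≤ sl⁻¹ * r := by positivity
        linarith
      · linarith
    have hdm : (1 + sm⁻¹ * r) ^ (-N₁) ≤ 1 := by
      apply Real.rpow_le_one_of_one_le_of_nonpos
      · have : (0:ℝ) ≤ sm⁻¹ * r := by positivity
        linarith
      · linarith
    have hb2 : (1 + sl⁻¹ * r) ^ (-N₁) ≤ sl^N₁ * r^(-N₁) := by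
      have h0 : (0:ℝ) < sl⁻¹ * r := mul_pos (inv_pos.2 hsl) hr0
      have h : (1 + sl⁻¹ * r) ^ (-N₁) ≤ (sl⁻¹ * r) ^ (-N₁) :=
        Real.rpow_le_rpow_of_nonpos h0 (by linarith) (by linarith)
      have heq : (sl⁻¹ * r) ^ (-N₁) = sl^N₁ * r^(-N₁) := by
        rw [Real.mul_rpow (inv_nonneg.2 hsl.le) hr0.le, Real.inv_rpow hsl.le,
          ← Real.rpow_neg hsl.le, neg_neg]
      rw [← heq]; exact h
    have hb4 : (1 + sm⁻¹ * r) ^ (-N₁) ≤ sm^N₁ * r^(-N₁) := by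
      have h0 : (0:ℝ) < sm⁻¹ * r := mul_pos (inv_pos.2 hsm) hr0
      have h : (1 + sm⁻¹ * r) ^ (-N₁) ≤ (sm⁻¹ * r) ^ (-N₁) :=
        Real.rpow_le_rpow_of_nonpos h0 (by linarith) (by linarith)
      have heq : (sm⁻¹ * r) ^ (-N₁) = sm^N₁ * r^(-N₁) := by
        rw [Real.mul_rpow (inv_nonneg.2 hsm.le) hr0.le, Real.inv_rpow hsm.le,
          ← Real.rpow_neg hsm.le, neg_neg]
      rw [← heq]; exact h
    have hrN : (0:ℝ) ≤ r ^ (-N₁) := Real.rpow_nonneg hr0.le _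
    by_cases hrsl : r ≤ sl
    · -- region 1 : 0 < r ≤ sl
      have hbl : min 1 (sl⁻¹ * (1+r)) ^ M ≤ K * (sl⁻¹ * (1+r)) ^ M := by
        rw [hKdef]
        refine auxA1 hxl0 ?_ hB1
        rw [← div_eq_inv_mul, div_le_iff₀ hsl]
        linarith
      have hbm : min 1 (sm⁻¹ * (1+r)) ^ M ≤ K * (sm⁻¹ * (1+r)) ^ M := by
        rw [hKdef]
        refine auxA1 hxm0 ?_ hB1
        rw [← div_eq_inv_mul, div_le_iff₀ hsm]
        linarith
      have hP1 : (0:ℝ) ≤ min 1 (sl⁻¹ * (1+r)) ^ M :=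
        Real.rpow_nonneg (le_min zero_le_one hxl0.le) M
      have hP2 : (0:ℝ) ≤ min 1 (sm⁻¹ * (1+r)) ^ M :=
        Real.rpow_nonneg (le_min zero_le_one hxm0.le) M
      have hKl : (0:ℝ) ≤ K * (sl⁻¹ * (1+r)) ^ M :=
        mul_nonneg hK0.le (Real.rpow_nonneg hxl0.le _)
      have hKm : (0:ℝ) ≤ K * (sm⁻¹ * (1+r)) ^ M :=
        mul_nonneg hK0.le (Real.rpow_nonneg hxm0.le _)
      have m1 : min 1 (sl⁻¹ * (1+r)) ^ M * min 1 (sm⁻¹ * (1+r)) ^ M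
          ≤ (K * (sl⁻¹ * (1+r)) ^ M) * (K * (sm⁻¹ * (1+r)) ^ M) :=
        mul_le_mul hbl hbm hP2 hKl
      have m2 := mul_le_mul m1 hdl hQ1 (mul_nonneg hKl hKm)
      have m3 := mul_le_mul m2 hdm hQ2 (mul_nonneg (mul_nonneg hKl hKm) zero_le_one)
      have m4 := mul_le_mul_of_nonneg_right m3 hr0.le
      have step1 : f r ≤ (K * (sl⁻¹ * (1+r)) ^ M) * (K * (sm⁻¹ * (1+r)) ^ M) * r := by
        simp only [hfdef]
        calc (min 1 (sl⁻¹ * (1 + r))) ^ M * (min 1 (sm⁻¹ * (1 + r))) ^ M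
              * (1 + sl⁻¹ * r) ^ (-N₁) * (1 + sm⁻¹ * r) ^ (-N₁) * r
            ≤ (K * (sl⁻¹ * (1+r)) ^ M) * (K * (sm⁻¹ * (1+r)) ^ M) * 1 * 1 * r := m4
          _ = (K * (sl⁻¹ * (1+r)) ^ M) * (K * (sm⁻¹ * (1+r)) ^ M) * r := by ring
      have hxl : (sl⁻¹ * (1+r)) ^ M = sl^(-M) * (1+r)^M := by
        rw [Real.mul_rpow (inv_nonneg.2 hsl.le) h1r.le, Real.inv_rpow hsl.le,
          ← Real.rpow_neg hsl.le]
      have hxm : (sm⁻¹ * (1+r)) ^ M = sm^(-M) * (1+r)^M := by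
        rw [Real.mul_rpow (inv_nonneg.2 hsm.le) h1r.le, Real.inv_rpow hsm.le,
          ← Real.rpow_neg hsm.le]
      have step2 : (1+r)^M * (1+r)^M * r ≤ B^(2*M+1) * sl^(2*M+1) := by
        have hpp : (1+r)^M * (1+r)^M = (1+r)^(2*M) := by
          rw [← Real.rpow_add h1r]; ring_nf
        have hq : (1+r)^(2*M) * r ≤ (1+r)^(2*M+1) := by
          have h' : (1+r)^(2*M+1) = (1+r)^(2*M) * (1+r) := Real.rpow_add_one h1r.ne' (2*M)
          rw [h']
          exact mul_le_mul_of_nonneg_left (by linarith) (Real.rpow_nonneg h1r.le _)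
        have hlast : (1+r)^(2*M+1) ≤ B^(2*M+1) * sl^(2*M+1) := by
          rw [← Real.mul_rpow hB0.le hsl.le]
          exact Real.rpow_le_rpow h1r.le (by linarith) hM2.le
        calc (1+r)^M * (1+r)^M * r = (1+r)^(2*M) * r := by rw [hpp]
          _ ≤ (1+r)^(2*M+1) := hq
          _ ≤ B^(2*M+1) * sl^(2*M+1) := hlast
      have hgr : g r = D1 := by simp only [hgdef]; rw [if_pos hrsl]
      rw [hgr, hD1def]
      calc f r ≤ (K * (sl⁻¹ * (1+r)) ^ M) * (K * (sm⁻¹ * (1+r)) ^ M) * r := step1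
        _ = (K^2 * sl^(-M) * sm^(-M)) * ((1+r)^M * (1+r)^M * r) := by
            rw [hxl, hxm]; ring
        _ ≤ (K^2 * sl^(-M) * sm^(-M)) * (B^(2*M+1) * sl^(2*M+1)) := by
            refine mul_le_mul_of_nonneg_left step2 ?_
            exact mul_nonneg (mul_nonneg (pow_nonneg hK0.le 2)
              (Real.rpow_nonneg hsl.le _)) (Real.rpow_nonneg hsm.le _)
        _ = K^2 * B^(2*M+1) * sl^(2*M+1) * sl^(-M) * sm^(-M) := by ring
    · by_cases hrsm : r ≤ sm
      · -- region 2 : sl < r ≤ sm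
        have hslr : sl < r := not_le.1 hrsl
        have hmin1 : min 1 (sl⁻¹ * (1+r)) = 1 := by
          apply min_eq_left
          rw [← div_eq_inv_mul, le_div_iff₀ hsl]
          linarith
        have hb3 : min 1 (sm⁻¹ * (1+r)) ^ M ≤ K * (sm⁻¹ * r) ^ M := by
          rw [hKdef]
          refine auxA2 (mul_pos (inv_pos.2 hsm) hr0) ?_ ?_ ?_ hB1
          · rw [← div_eq_inv_mul, div_le_one hsm]; exact hrsm
          · exact mul_le_mul_of_nonneg_left (by linarith) (inv_nonneg.2 hsm.le)
          · have hcr : 1 ≤ r / c := (one_le_div hc).2 (hcsl.trans hslr.le)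
            have h1rB : 1 + r ≤ B * r := by
              have hBs : B * r = r + r/c := by rw [hBdef]; ring
              linarith
            calc sm⁻¹ * (1+r) ≤ sm⁻¹ * (B*r) :=
                  mul_le_mul_of_nonneg_left h1rB (inv_nonneg.2 hsm.le)
              _ = B * (sm⁻¹ * r) := by ring
        have hP2 : (0:ℝ) ≤ min 1 (sm⁻¹ * (1+r)) ^ M :=
          Real.rpow_nonneg (le_min zero_le_one hxm0.le) M
        have hKm : (0:ℝ) ≤ K * (sm⁻¹ * r) ^ M :=
          mul_nonneg hK0.le (Real.rpow_nonneg (mul_nonneg (inv_nonneg.2 hsm.le) hr0.le) _)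
        have hslN : (0:ℝ) ≤ sl^N₁ * r^(-N₁) :=
          mul_nonneg (Real.rpow_nonneg hsl.le _) hrN
        have m1 : min 1 (sm⁻¹ * (1+r)) ^ M * (1 + sl⁻¹ * r) ^ (-N₁)
            ≤ (K * (sm⁻¹ * r) ^ M) * (sl^N₁ * r^(-N₁)) :=
          mul_le_mul hb3 hb2 hQ1 hKm
        have m2 := mul_le_mul m1 hdm hQ2 (mul_nonneg hKm hslN)
        have m3 := mul_le_mul_of_nonneg_right m2 hr0.le
        have step1 : f r ≤ (K * (sm⁻¹ * r) ^ M) * (sl^N₁ * r^(-N₁)) * r := by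
          simp only [hfdef]
          calc (min 1 (sl⁻¹ * (1 + r))) ^ M * (min 1 (sm⁻¹ * (1 + r))) ^ M
                * (1 + sl⁻¹ * r) ^ (-N₁) * (1 + sm⁻¹ * r) ^ (-N₁) * r
              = min 1 (sm⁻¹ * (1+r)) ^ M * (1 + sl⁻¹ * r) ^ (-N₁)
                  * (1 + sm⁻¹ * r) ^ (-N₁) * r := by rw [hmin1, Real.one_rpow]; ring
            _ ≤ (K * (sm⁻¹ * r) ^ M) * (sl^N₁ * r^(-N₁)) * 1 * r := m3
            _ = (K * (sm⁻¹ * r) ^ M) * (sl^N₁ * r^(-N₁)) * r := by ring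
        have hxm : (sm⁻¹ * r) ^ M = sm^(-M) * r^M := by
          rw [Real.mul_rpow (inv_nonneg.2 hsm.le) hr0.le, Real.inv_rpow hsm.le,
            ← Real.rpow_neg hsm.le]
        have hrcomb : r^M * r^(-N₁) * r = r^(M+1-N₁) := by
          rw [← Real.rpow_add hr0, ← Real.rpow_add_one hr0.ne']
          congr 1; ring
        have hgr : g r = D2 * r ^ (M+1-N₁) := by
          simp only [hgdef]; rw [if_neg hrsl, if_pos hrsm]
        rw [hgr, hD2def]
        calc f r ≤ (K * (sm⁻¹ * r) ^ M) * (sl^N₁ * r^(-N₁)) * r := step1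
          _ = (K * sl^N₁ * sm^(-M)) * (r^M * r^(-N₁) * r) := by rw [hxm]; ring
          _ = K * sl^N₁ * sm^(-M) * r^(M+1-N₁) := by rw [hrcomb]
      · -- region 3 : sm < r
        have hsmr : sm < r := not_le.1 hrsm
        have hslr : sl < r := lt_of_le_of_lt hslsm hsmr
        have hmin1 : min 1 (sl⁻¹ * (1+r)) = 1 := by
          apply min_eq_left
          rw [← div_eq_inv_mul, le_div_iff₀ hsl]
          linarith
        have hmin2 : min 1 (sm⁻¹ * (1+r)) = 1 := by
          apply min_eq_left
          rw [← div_eq_inv_mul, le_div_iff₀ hsm]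
          linarith
        have hslN : (0:ℝ) ≤ sl^N₁ * r^(-N₁) :=
          mul_nonneg (Real.rpow_nonneg hsl.le _) hrN
        have m1 : (1 + sl⁻¹ * r) ^ (-N₁) * (1 + sm⁻¹ * r) ^ (-N₁)
            ≤ (sl^N₁ * r^(-N₁)) * (sm^N₁ * r^(-N₁)) :=
          mul_le_mul hb2 hb4 hQ2 hslN
        have m2 := mul_le_mul_of_nonneg_right m1 hr0.le
        have step1 : f r ≤ (sl^N₁ * r^(-N₁)) * (sm^N₁ * r^(-N₁)) * r := by
          simp only [hfdef]
          calc (min 1 (sl⁻¹ * (1 + r))) ^ M * (min 1 (sm⁻¹ * (1 + r))) ^ M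
                * (1 + sl⁻¹ * r) ^ (-N₁) * (1 + sm⁻¹ * r) ^ (-N₁) * r
              = (1 + sl⁻¹ * r) ^ (-N₁) * (1 + sm⁻¹ * r) ^ (-N₁) * r := by
                rw [hmin1, hmin2, Real.one_rpow]; ring
            _ ≤ (sl^N₁ * r^(-N₁)) * (sm^N₁ * r^(-N₁)) * r := m2
        have hrcomb : r^(-N₁) * r^(-N₁) * r = r^(1-2*N₁) := by
          rw [← Real.rpow_add hr0, ← Real.rpow_add_one hr0.ne']
          congr 1; ring
        have hgr : g r = D3 * r ^ (1-2*N₁) := by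
          simp only [hgdef]; rw [if_neg hrsl, if_neg hrsm]
        rw [hgr, hD3def]
        calc f r ≤ (sl^N₁ * r^(-N₁)) * (sm^N₁ * r^(-N₁)) * r := step1
          _ = (sl^N₁ * sm^N₁) * (r^(-N₁) * r^(-N₁) * r) := by ring
          _ = sl^N₁ * sm^N₁ * r^(1-2*N₁) := by rw [hrcomb]
  -- integrability of g on the three pieces
  have hIoc1 : IntegrableOn g (Ioc (0:ℝ) sl) volume := by
    have hbase : IntegrableOn (fun _ : ℝ => D1) (Ioc (0:ℝ) sl) volume :=
      integrableOn_const measure_Ioc_lt_top.ne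
    refine hbase.congr_fun (fun r hr => ?_) measurableSet_Ioc
    simp only [hgdef]
    rw [if_pos hr.2]
  have hIoc2 : IntegrableOn g (Ioc sl sm) volume := by
    refine IntegrableOn.congr_fun
      (((intervalIntegral.intervalIntegrable_rpow' he).1).const_mul D2) ?_ measurableSet_Ioc
    intro r hr
    simp only [hgdef]
    rw [if_neg (not_le.2 hr.1), if_pos hr.2]
  have hIoi3 : IntegrableOn g (Ioi sm) volume := by
    refine IntegrableOn.congr_fun
      ((integrableOn_Ioi_rpow_of_lt ha hsm).const_mul D3) ?_ measurableSet_Ioi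
    intro r hr
    simp only [hgdef]
    rw [if_neg (not_le.2 (lt_of_le_of_lt hslsm hr)), if_neg (not_le.2 hr)]
  have hIoisl : IntegrableOn g (Ioi sl) volume := by
    rw [← Ioc_union_Ioi_eq_Ioi hslsm]
    exact hIoc2.union hIoi3
  have hgint : IntegrableOn g (Ioi (0:ℝ)) volume := by
    rw [← Ioc_union_Ioi_eq_Ioi hsl.le]
    exact hIoc1.union hIoisl
  -- comparison of integrals
  have hmono : (∫ r in Ioi (0:ℝ), f r) ≤ ∫ r in Ioi (0:ℝ), g r := by
    refine integral_mono_of_nonneg ?_ hgint ?_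
    · exact (ae_restrict_iff' measurableSet_Ioi).2 (Filter.Eventually.of_forall hnn)
    · exact (ae_restrict_iff' measurableSet_Ioi).2 (Filter.Eventually.of_forall hfg)
  -- splitting and evaluation
  have hsplit : (∫ r in Ioi (0:ℝ), g r)
      = (∫ r in Ioc (0:ℝ) sl, g r) + (∫ r in Ioc sl sm, g r) + (∫ r in Ioi sm, g r) := by
    rw [← Ioc_union_Ioi_eq_Ioi hsl.le,
      setIntegral_union (Ioc_disjoint_Ioi le_rfl) measurableSet_Ioi hIoc1 hIoisl,
      ← Ioc_union_Ioi_eq_Ioi hslsm,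
      setIntegral_union (Ioc_disjoint_Ioi le_rfl) measurableSet_Ioi hIoc2 hIoi3]
    ring
  have i1 : (∫ r in Ioc (0:ℝ) sl, g r) = D1 * sl := by
    rw [setIntegral_congr_fun measurableSet_Ioc
      (fun r hr => by simp only [hgdef]; rw [if_pos hr.2] : EqOn g (fun _ => D1) (Ioc 0 sl)),
      setIntegral_const, measureReal_def, Real.volume_Ioc,
      ENNReal.toReal_ofReal (by linarith : (0:ℝ) ≤ sl - 0), smul_eq_mul]
    ring
  have i2 : (∫ r in Ioc sl sm, g r)
      = D2 * ((sm^(M+1-N₁+1) - sl^(M+1-N₁+1))/(M+1-N₁+1)) := by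
    rw [setIntegral_congr_fun measurableSet_Ioc
      (fun r hr => by
        simp only [hgdef]; rw [if_neg (not_le.2 hr.1), if_pos hr.2] :
        EqOn g (fun r => D2 * r ^ (M+1-N₁)) (Ioc sl sm)),
      integral_const_mul, ← intervalIntegral.integral_of_le hslsm,
      integral_rpow (Or.inl he)]
  have i3 : (∫ r in Ioi sm, g r) = D3 * (-sm^(1-2*N₁+1)/(1-2*N₁+1)) := by
    rw [setIntegral_congr_fun measurableSet_Ioi
      (fun r hr => by
        simp only [hgdef]
        rw [if_neg (not_le.2 (lt_of_le_of_lt hslsm hr)), if_neg (not_le.2 hr)] :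
        EqOn g (fun r => D3 * r ^ (1-2*N₁)) (Ioi sm)),
      integral_const_mul, integral_Ioi_rpow_of_lt ha hsm]
  -- final algebra
  have hpow : ∀ p : ℝ, β ≤ p → sl^p * sm^(-p) ≤ (sl/sm)^β := by
    intro p hp
    have hq : sl^p * sm^(-p) = (sl/sm)^p := by
      rw [Real.div_rpow hsl.le hsm.le, Real.rpow_neg hsm.le, div_eq_mul_inv]
    rw [hq]
    exact Real.rpow_le_rpow_of_exponent_ge (div_pos hsl hsm) ((div_le_one hsm).2 hslsm) hp
  have hpownn : (0:ℝ) ≤ (sl/sm)^β := Real.rpow_nonneg (div_nonneg hsl.le hsm.le) _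
  have tb1 : sm^(-2:ℝ) * (D1 * sl) ≤ (K^2*B^(2*M+1)) * (sl/sm)^β := by
    have e1 : sl^(2*M+1) * sl^(-M) * sl = sl^(M+2) := by
      rw [← Real.rpow_add hsl, ← Real.rpow_add_one hsl.ne']
      congr 1; ring
    have e2 : sm^(-M) * sm^(-2:ℝ) = sm^(-(M+2)) := by
      rw [← Real.rpow_add hsm]; congr 1; ring
    have h1 : sm^(-2:ℝ) * (D1 * sl) = (K^2*B^(2*M+1)) * (sl^(M+2) * sm^(-(M+2))) := by
      rw [hD1def]
      calc sm^(-2:ℝ) * (K^2*B^(2*M+1)*sl^(2*M+1)*sl^(-M)*sm^(-M) * sl)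
          = (K^2*B^(2*M+1)) * ((sl^(2*M+1) * sl^(-M) * sl) * (sm^(-M)*sm^(-2:ℝ))) := by ring
        _ = _ := by rw [e1, e2]
    rw [h1]
    exact mul_le_mul_of_nonneg_left (hpow (M+2) hβM)
      (mul_nonneg (pow_nonneg hK0.le 2) hBM.le)
  have tb2 : sm^(-2:ℝ) * (D2 * ((sm^(M+1-N₁+1) - sl^(M+1-N₁+1))/(M+1-N₁+1)))
      ≤ (K/(M+2-N₁)) * (sl/sm)^β := by
    have he1 : (0:ℝ) < M+1-N₁+1 := by linarith
    have hD2nn : (0:ℝ) ≤ D2 := by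
      rw [hD2def]
      exact mul_nonneg (mul_nonneg hK0.le (Real.rpow_nonneg hsl.le _))
        (Real.rpow_nonneg hsm.le _)
    have hq : (sm^(M+1-N₁+1) - sl^(M+1-N₁+1))/(M+1-N₁+1) ≤ sm^(M+1-N₁+1)/(M+1-N₁+1) := by
      have h := Real.rpow_nonneg hsl.le (M+1-N₁+1)
      exact (div_le_div_iff_of_pos_right he1).2 (by linarith)
    have hstep : sm^(-2:ℝ) * (D2 * ((sm^(M+1-N₁+1) - sl^(M+1-N₁+1))/(M+1-N₁+1)))
        ≤ sm^(-2:ℝ) * (D2 * (sm^(M+1-N₁+1)/(M+1-N₁+1))) := by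
      refine mul_le_mul_of_nonneg_left (mul_le_mul_of_nonneg_left hq hD2nn)
        (Real.rpow_nonneg hsm.le _)
    have e3 : sm^(-M) * sm^(M+1-N₁+1) * sm^(-2:ℝ) = sm^(-N₁) := by
      rw [← Real.rpow_add hsm, ← Real.rpow_add hsm]; congr 1; ring
    have heq : sm^(-2:ℝ) * (D2 * (sm^(M+1-N₁+1)/(M+1-N₁+1)))
        = (K/(M+2-N₁)) * (sl^N₁ * sm^(-N₁)) := by
      rw [hD2def]
      calc sm^(-2:ℝ) * (K * sl^N₁ * sm^(-M) * (sm^(M+1-N₁+1)/(M+1-N₁+1)))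
          = (K/(M+1-N₁+1)) * (sl^N₁ * (sm^(-M) * sm^(M+1-N₁+1) * sm^(-2:ℝ))) := by ring
        _ = (K/(M+1-N₁+1)) * (sl^N₁ * sm^(-N₁)) := by rw [e3]
        _ = (K/(M+2-N₁)) * (sl^N₁ * sm^(-N₁)) := by
              rw [show M+1-N₁+1 = M+2-N₁ from by ring]
    calc sm^(-2:ℝ) * (D2 * ((sm^(M+1-N₁+1) - sl^(M+1-N₁+1))/(M+1-N₁+1)))
        ≤ sm^(-2:ℝ) * (D2 * (sm^(M+1-N₁+1)/(M+1-N₁+1))) := hstep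
      _ = (K/(M+2-N₁)) * (sl^N₁ * sm^(-N₁)) := heq
      _ ≤ (K/(M+2-N₁)) * (sl/sm)^β :=
          mul_le_mul_of_nonneg_left (hpow N₁ hβN) (div_nonneg hK0.le hMN.le)
  have tb3 : sm^(-2:ℝ) * (D3 * (-sm^(1-2*N₁+1)/(1-2*N₁+1)))
      ≤ (1/(2*N₁-2)) * (sl/sm)^β := by
    have e5 : sm^N₁ * sm^(1-2*N₁+1) * sm^(-2:ℝ) = sm^(-N₁) := by
      rw [← Real.rpow_add hsm, ← Real.rpow_add hsm]; congr 1; ring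
    have e7 : -sm^(1-2*N₁+1)/(1-2*N₁+1) = sm^(1-2*N₁+1)/(2*N₁-2) := by
      rw [div_eq_div_iff (by linarith) (by linarith)]; ring
    have heq : sm^(-2:ℝ) * (D3 * (-sm^(1-2*N₁+1)/(1-2*N₁+1)))
        = (1/(2*N₁-2)) * (sl^N₁ * sm^(-N₁)) := by
      rw [hD3def, e7]
      calc sm^(-2:ℝ) * (sl^N₁ * sm^N₁ * (sm^(1-2*N₁+1)/(2*N₁-2)))
          = (1/(2*N₁-2)) * (sl^N₁ * (sm^N₁ * sm^(1-2*N₁+1) * sm^(-2:ℝ))) := by ring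
        _ = (1/(2*N₁-2)) * (sl^N₁ * sm^(-N₁)) := by rw [e5]
    rw [heq]
    refine mul_le_mul_of_nonneg_left (hpow N₁ hβN) ?_
    apply div_nonneg zero_le_one; linarith
  have hconv : (sm/sl)^(-β) = (sl/sm)^β := by
    rw [Real.rpow_neg (div_nonneg hsm.le hsl.le),
      ← Real.inv_rpow (div_nonneg hsm.le hsl.le), inv_div]
  have hfin : sm ^ (-2:ℝ) * (∫ r in Ioi (0:ℝ), f r)
      ≤ (K^2 * B^(2*M+1) + K / (M+2-N₁) + 1/(2*N₁-2)) * (sm/sl)^(-β) := by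
    calc sm ^ (-2:ℝ) * (∫ r in Ioi (0:ℝ), f r)
        ≤ sm ^ (-2:ℝ) * (∫ r in Ioi (0:ℝ), g r) :=
          mul_le_mul_of_nonneg_left hmono (Real.rpow_nonneg hsm.le _)
      _ = sm^(-2:ℝ)*(D1*sl) + sm^(-2:ℝ)*(D2 * ((sm^(M+1-N₁+1) - sl^(M+1-N₁+1))/(M+1-N₁+1)))
            + sm^(-2:ℝ)*(D3*(-sm^(1-2*N₁+1)/(1-2*N₁+1))) := by
          rw [hsplit, i1, i2, i3]; ring
      _ ≤ (K^2*B^(2*M+1)) * (sl/sm)^β + (K/(M+2-N₁)) * (sl/sm)^β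
            + (1/(2*N₁-2)) * (sl/sm)^β := add_le_add (add_le_add tb1 tb2) tb3
      _ = (K^2 * B^(2*M+1) + K / (M+2-N₁) + 1/(2*N₁-2)) * (sl/sm)^β := by ring
      _ = (K^2 * B^(2*M+1) + K / (M+2-N₁) + 1/(2*N₁-2)) * (sm/sl)^(-β) := by rw [hconv]
  exact hfin

end
end

section
/- Let Λ and Δ be countable index sets, let p > 0 and set q := min{1, p}. Let (A_{λ,μ})_{λ∈Λ, μ∈Δ} be a complex matrix with K := max{ sup_{λ∈Λ} Σ_{μ∈Δ} |A_{λ,μ}|^q , sup_{μ∈Δ} Σ_{λ∈Λ} |A_{λ,μ}|^q } < ∞. Then for every (c_λ) ∈ ℓ^p(Λ), the series Σ_{λ∈Λ} A_{λ,μ} c_λ converges absolutely for each μ ∈ Δ, and the resulting sequence satisfies Σ_{μ∈Δ} |Σ_{λ∈Λ} A_{λ,μ} c_λ|^p ≤ K^{p/q} · Σ_{λ∈Λ} |c_λ|^p. -/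
open scoped NNReal
open scoped ENNReal

noncomputable section

/-- Subadditivity of `x ↦ x ^ p` for `0 < p ≤ 1` on `ℝ≥0∞`, tsum version. -/
lemma aux_ennreal_tsum_rpow_le {ι : Type*} (f : ι → ℝ≥0∞) {p : ℝ} (hp : 0 < p) (hp1 : p ≤ 1) :
    (∑' i, f i) ^ p ≤ ∑' i, f i ^ p := by
  rw [ENNReal.tsum_eq_iSup_sum]
  have hmap : (⨆ s : Finset ι, ∑ i ∈ s, f i) ^ p = ⨆ s : Finset ι, (∑ i ∈ s, f i) ^ p :=
    Monotone.map_ciSup_of_continuousAt ENNReal.continuous_rpow_const.continuousAt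
      (fun x y h => ENNReal.rpow_le_rpow h hp.le)
  rw [hmap]
  refine iSup_le fun s => ?_
  calc (∑ i ∈ s, f i) ^ p ≤ ∑ i ∈ s, f i ^ p := by
        classical
        induction s using Finset.cons_induction with
        | empty => simp [ENNReal.zero_rpow_of_pos hp]
        | cons i s hi ih =>
          rw [Finset.sum_cons, Finset.sum_cons]
          exact (ENNReal.rpow_add_le_add_rpow _ _ hp.le hp1).trans (by gcongr)
    _ ≤ ∑' i, f i ^ p := ENNReal.sum_le_tsum s

/-- Hölder's inequality for `tsum` in `ℝ≥0∞`. -/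
lemma aux_ennreal_tsum_mul_le {ι : Type*} {p q : ℝ} (hpq : p.HolderConjugate q)
    (f g : ι → ℝ≥0∞) :
    ∑' i, f i * g i ≤ (∑' i, f i ^ p) ^ (1 / p) * (∑' i, g i ^ q) ^ (1 / q) := by
  letI : MeasurableSpace ι := ⊤
  haveI : MeasurableSingletonClass ι := ⟨fun _ => trivial⟩
  have h := ENNReal.lintegral_mul_le_Lp_mul_Lq
    (MeasureTheory.Measure.count : MeasureTheory.Measure ι) hpq
    (f := f) (g := g) (Measurable.aemeasurable fun _ _ => trivial)
    (Measurable.aemeasurable fun _ _ => trivial)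
  simpa [MeasureTheory.lintegral_count] using h

/-- Lemma 4.5, Schur-type bound for matrices on `ℓ^p`: if
`K := max{sup_λ Σ_μ |A_{λ,μ}|^q, sup_μ Σ_λ |A_{λ,μ}|^q} < ∞` with `q = min{1,p}`, then
for every `(c_λ) ∈ ℓ^p` the series `Σ_λ A_{λ,μ} c_λ` converges absolutely for each `μ`
and `Σ_μ |Σ_λ A_{λ,μ} c_λ|^p ≤ K^{p/q} Σ_λ |c_λ|^p`. -/
theorem stmt12 (Λ Δ : Type*) [Countable Λ] [Countable Δ] (p : ℝ) (hp : 0 < p)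
    (A : Λ → Δ → ℂ) (K : ℝ)
    (hrow : ∀ l : Λ, Summable (fun μ : Δ => ‖A l μ‖ ^ min 1 p) ∧
      (∑' μ : Δ, ‖A l μ‖ ^ min 1 p) ≤ K)
    (hcol : ∀ μ : Δ, Summable (fun l : Λ => ‖A l μ‖ ^ min 1 p) ∧
      (∑' l : Λ, ‖A l μ‖ ^ min 1 p) ≤ K)
    (c : Λ → ℂ) (hc : Summable (fun l : Λ => ‖c l‖ ^ p)) :
    (∀ μ : Δ, Summable (fun l : Λ => ‖A l μ * c l‖)) ∧
    Summable (fun μ : Δ => ‖∑' l : Λ, A l μ * c l‖ ^ p) ∧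
    (∑' μ : Δ, ‖∑' l : Λ, A l μ * c l‖ ^ p) ≤ K ^ (p / min 1 p) * ∑' l : Λ, ‖c l‖ ^ p := by
  set q : ℝ := min 1 p with hqdef
  have hq : 0 < q := lt_min one_pos hp
  have hq1 : q ≤ 1 := min_le_left _ _
  rcases isEmpty_or_nonempty Λ with hΛ | hΛ
  · have hzero : ∀ μ : Δ, (∑' l : Λ, A l μ * c l) = 0 := fun μ => tsum_empty
    refine ⟨fun μ => summable_empty, ?_, ?_⟩
    · simpa [hzero, Real.zero_rpow hp.ne'] using summable_zero
    · have h1 : (∑' μ : Δ, ‖∑' l : Λ, A l μ * c l‖ ^ p) = 0 := by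
        simp [hzero, Real.zero_rpow hp.ne']
      have h2 : (∑' l : Λ, ‖c l‖ ^ p) = 0 := tsum_empty
      rw [h1, h2, mul_zero]
  have hK0 : 0 ≤ K :=
    le_trans (tsum_nonneg fun μ => Real.rpow_nonneg (norm_nonneg _) _)
      (hrow (Classical.arbitrary Λ)).2
  set a : Λ → Δ → ℝ≥0∞ := fun l μ => (‖A l μ‖₊ : ℝ≥0∞) with ha
  set b : Λ → ℝ≥0∞ := fun l => (‖c l‖₊ : ℝ≥0∞) with hb
  set Ke : ℝ≥0∞ := ENNReal.ofReal K with hKe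
  -- translation of hypotheses
  have hcoe : ∀ (x : ℂ) (r : ℝ), 0 ≤ r → (‖x‖₊ : ℝ≥0∞) ^ r = ENNReal.ofReal (‖x‖ ^ r) := by
    intro x r hr
    rw [← ENNReal.ofReal_coe_nnreal, coe_nnnorm, ENNReal.ofReal_rpow_of_nonneg (norm_nonneg _) hr]
  have hrowE : ∀ l : Λ, ∑' μ : Δ, a l μ ^ q ≤ Ke := by
    intro l
    calc ∑' μ : Δ, a l μ ^ q = ENNReal.ofReal (∑' μ : Δ, ‖A l μ‖ ^ q) := by
          rw [ENNReal.ofReal_tsum_of_nonneg (fun μ => Real.rpow_nonneg (norm_nonneg _) _)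
            (hrow l).1]
          exact tsum_congr fun μ => hcoe _ _ hq.le
      _ ≤ Ke := ENNReal.ofReal_le_ofReal (hrow l).2
  have hcolE : ∀ μ : Δ, ∑' l : Λ, a l μ ^ q ≤ Ke := by
    intro μ
    calc ∑' l : Λ, a l μ ^ q = ENNReal.ofReal (∑' l : Λ, ‖A l μ‖ ^ q) := by
          rw [ENNReal.ofReal_tsum_of_nonneg (fun l => Real.rpow_nonneg (norm_nonneg _) _)
            (hcol μ).1]
          exact tsum_congr fun l => hcoe _ _ hq.le
      _ ≤ Ke := ENNReal.ofReal_le_ofReal (hcol μ).2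
  have hbE : ∑' l : Λ, b l ^ p = ENNReal.ofReal (∑' l : Λ, ‖c l‖ ^ p) := by
    rw [ENNReal.ofReal_tsum_of_nonneg (fun l => Real.rpow_nonneg (norm_nonneg _) _) hc]
    exact tsum_congr fun l => hcoe _ _ hp.le
  have hbfin : ∑' l : Λ, b l ^ p ≠ ⊤ := by rw [hbE]; exact ENNReal.ofReal_ne_top
  set S : Δ → ℝ≥0∞ := fun μ => ∑' l : Λ, a l μ * b l with hS
  -- the double sum bound
  have hdouble : ∑' μ : Δ, ∑' l : Λ, a l μ ^ q * b l ^ p ≤ Ke * ∑' l : Λ, b l ^ p := by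
    rw [ENNReal.tsum_comm]
    calc ∑' l : Λ, ∑' μ : Δ, a l μ ^ q * b l ^ p
        = ∑' l : Λ, (∑' μ : Δ, a l μ ^ q) * b l ^ p :=
          tsum_congr fun l => ENNReal.tsum_mul_right
      _ ≤ ∑' l : Λ, Ke * b l ^ p :=
          ENNReal.tsum_le_tsum fun l => mul_le_mul_left (hrowE l) _
      _ = Ke * ∑' l : Λ, b l ^ p := ENNReal.tsum_mul_left
  -- the key estimate
  have hkey : ∑' μ : Δ, S μ ^ p ≤ Ke ^ (p / q) * ∑' l : Λ, b l ^ p := by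
    rcases le_or_gt p 1 with hp1 | hp1
    · -- case p ≤ 1, q = p
      have hqp : q = p := min_eq_right hp1
      have hpt : ∀ μ : Δ, S μ ^ p ≤ ∑' l : Λ, a l μ ^ q * b l ^ p := by
        intro μ
        refine (aux_ennreal_tsum_rpow_le _ hp hp1).trans (le_of_eq ?_)
        exact tsum_congr fun l => by
          rw [ENNReal.mul_rpow_of_nonneg _ _ hp.le, hqp]
      calc ∑' μ : Δ, S μ ^ p ≤ ∑' μ : Δ, ∑' l : Λ, a l μ ^ q * b l ^ p :=
            ENNReal.tsum_le_tsum hpt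
        _ ≤ Ke * ∑' l : Λ, b l ^ p := hdouble
        _ = Ke ^ (p / q) * ∑' l : Λ, b l ^ p := by
            rw [hqp, div_self hp.ne', ENNReal.rpow_one]
    · -- case 1 < p, q = 1
      have hq1' : q = 1 := min_eq_left hp1.le
      set r : ℝ := Real.conjExponent p with hrdef
      have hpq : p.HolderConjugate r := Real.HolderConjugate.conjExponent hp1
      have hrpos : 0 < r := hpq.symm.pos
      have hinv : 1 / p + 1 / r = 1 := by simpa [one_div] using hpq.inv_add_inv_eq_one
      have hpr : p / r = p - 1 := by
        have h1 : (1 : ℝ) / r = 1 - 1 / p := by linarith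
        rw [div_eq_mul_one_div, h1, mul_sub, mul_one, mul_one_div, div_self hp.ne']
      have hcolE' : ∀ μ : Δ, ∑' l : Λ, a l μ ≤ Ke := by
        intro μ
        have := hcolE μ
        simpa [hq1'] using this
      have hpt : ∀ μ : Δ, S μ ^ p ≤ Ke ^ (p / r) * ∑' l : Λ, a l μ * b l ^ p := by
        intro μ
        have hstep : S μ ≤ (∑' l : Λ, a l μ * b l ^ p) ^ (1 / p) *
            (∑' l : Λ, a l μ) ^ (1 / r) := by
          have h := aux_ennreal_tsum_mul_le hpq
            (fun l : Λ => a l μ ^ (1 / p) * b l) (fun l : Λ => a l μ ^ (1 / r))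
          have h1 : ∀ l : Λ, (a l μ ^ (1 / p) * b l) * a l μ ^ (1 / r) = a l μ * b l := by
            intro l
            rw [mul_right_comm, ← ENNReal.rpow_add_of_nonneg _ _ (by positivity) (by positivity),
              hinv, ENNReal.rpow_one]
          have h2 : ∀ l : Λ, (a l μ ^ (1 / p) * b l) ^ p = a l μ * b l ^ p := by
            intro l
            rw [ENNReal.mul_rpow_of_nonneg _ _ hp.le, ← ENNReal.rpow_mul,
              one_div_mul_cancel hp.ne', ENNReal.rpow_one]
          have h3 : ∀ l : Λ, (a l μ ^ (1 / r)) ^ r = a l μ := by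
            intro l
            rw [← ENNReal.rpow_mul, one_div_mul_cancel hrpos.ne', ENNReal.rpow_one]
          calc S μ = ∑' l : Λ, (a l μ ^ (1 / p) * b l) * a l μ ^ (1 / r) :=
                (tsum_congr fun l => h1 l).symm
            _ ≤ (∑' l : Λ, (a l μ ^ (1 / p) * b l) ^ p) ^ (1 / p) *
                (∑' l : Λ, (a l μ ^ (1 / r)) ^ r) ^ (1 / r) := h
            _ = (∑' l : Λ, a l μ * b l ^ p) ^ (1 / p) * (∑' l : Λ, a l μ) ^ (1 / r) := by
                rw [tsum_congr h2, tsum_congr h3]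
        calc S μ ^ p ≤ ((∑' l : Λ, a l μ * b l ^ p) ^ (1 / p) *
              (∑' l : Λ, a l μ) ^ (1 / r)) ^ p := ENNReal.rpow_le_rpow hstep hp.le
          _ = (∑' l : Λ, a l μ * b l ^ p) * (∑' l : Λ, a l μ) ^ (p / r) := by
              rw [ENNReal.mul_rpow_of_nonneg _ _ hp.le, ← ENNReal.rpow_mul,
                ← ENNReal.rpow_mul, one_div_mul_cancel hp.ne', ENNReal.rpow_one]
              congr 1
              ring_nf
          _ ≤ (∑' l : Λ, a l μ * b l ^ p) * Ke ^ (p / r) := by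
              gcongr
              exact hcolE' μ
          _ = Ke ^ (p / r) * ∑' l : Λ, a l μ * b l ^ p := mul_comm _ _
      have hdouble' : ∑' μ : Δ, ∑' l : Λ, a l μ * b l ^ p ≤ Ke * ∑' l : Λ, b l ^ p := by
        have := hdouble
        simpa [hq1'] using this
      calc ∑' μ : Δ, S μ ^ p
          ≤ ∑' μ : Δ, Ke ^ (p / r) * ∑' l : Λ, a l μ * b l ^ p := ENNReal.tsum_le_tsum hpt
        _ = Ke ^ (p / r) * ∑' μ : Δ, ∑' l : Λ, a l μ * b l ^ p := ENNReal.tsum_mul_left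
        _ ≤ Ke ^ (p / r) * (Ke * ∑' l : Λ, b l ^ p) := by gcongr
        _ = Ke ^ (p / q) * ∑' l : Λ, b l ^ p := by
            rw [← mul_assoc, hpr]
            congr 1
            rw [hq1', div_one]
            calc Ke ^ (p - 1) * Ke = Ke ^ (p - 1) * Ke ^ (1 : ℝ) := by rw [ENNReal.rpow_one]
              _ = Ke ^ (p - 1 + 1) :=
                  (ENNReal.rpow_add_of_nonneg _ _ (by linarith) zero_le_one).symm
              _ = Ke ^ p := by ring_nf
  -- finiteness
  have hRHSfin : Ke ^ (p / q) * ∑' l : Λ, b l ^ p ≠ ⊤ :=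
    ENNReal.mul_ne_top
      (ENNReal.rpow_ne_top_of_nonneg (div_nonneg hp.le hq.le) ENNReal.ofReal_ne_top) hbfin
  have htsumfin : ∑' μ : Δ, S μ ^ p ≠ ⊤ := ne_top_of_le_ne_top hRHSfin hkey
  have hSfin : ∀ μ : Δ, S μ ≠ ⊤ := by
    intro μ
    have h1 : S μ ^ p ≠ ⊤ := ne_top_of_le_ne_top htsumfin (ENNReal.le_tsum μ)
    exact ((ENNReal.rpow_lt_top_iff_of_pos hp).mp h1.lt_top).ne
  -- goal 1
  have hterm : ∀ (μ : Δ) (l : Λ), (‖A l μ * c l‖₊ : ℝ≥0∞) = a l μ * b l := by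
    intro μ l
    rw [nnnorm_mul, ENNReal.coe_mul]
  have hnn : ∀ μ : Δ, Summable fun l : Λ => ‖A l μ * c l‖₊ := by
    intro μ
    rw [← ENNReal.tsum_coe_ne_top_iff_summable]
    rw [tsum_congr (hterm μ)]
    exact hSfin μ
  have goal1 : ∀ μ : Δ, Summable fun l : Λ => ‖A l μ * c l‖ := by
    intro μ
    simpa only [coe_nnnorm] using NNReal.summable_coe.mpr (hnn μ)
  have hS_eq : ∀ μ : Δ, (S μ).toReal = ∑' l : Λ, ‖A l μ * c l‖ := by
    intro μ
    have h0 : S μ = ((∑' l : Λ, ‖A l μ * c l‖₊ : ℝ≥0) : ℝ≥0∞) := by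
      rw [ENNReal.coe_tsum (hnn μ)]
      exact (tsum_congr (hterm μ)).symm
    rw [h0, ENNReal.coe_toReal, NNReal.coe_tsum]
    simp [coe_nnnorm]
  -- pointwise bound for goal 2 and 3
  have hT : ∀ μ : Δ, ‖∑' l : Λ, A l μ * c l‖ ^ p ≤ (S μ ^ p).toReal := by
    intro μ
    have h1 : ‖∑' l : Λ, A l μ * c l‖ ≤ (S μ).toReal := by
      rw [hS_eq μ]
      exact norm_tsum_le_tsum_norm (goal1 μ)
    have h2 := Real.rpow_le_rpow (norm_nonneg _) h1 hp.le
    rwa [ENNReal.toReal_rpow] at h2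
  have hsummable2 : Summable fun μ : Δ => (S μ ^ p).toReal := ENNReal.summable_toReal htsumfin
  have goal2 : Summable fun μ : Δ => ‖∑' l : Λ, A l μ * c l‖ ^ p :=
    Summable.of_nonneg_of_le (fun μ => Real.rpow_nonneg (norm_nonneg _) _) hT hsummable2
  refine ⟨goal1, goal2, ?_⟩
  calc ∑' μ : Δ, ‖∑' l : Λ, A l μ * c l‖ ^ p
      ≤ ∑' μ : Δ, (S μ ^ p).toReal := Summable.tsum_le_tsum hT goal2 hsummable2
    _ = (∑' μ : Δ, S μ ^ p).toReal :=
        (ENNReal.tsum_toReal_eq fun μ => ENNReal.rpow_ne_top_of_nonneg hp.le (hSfin μ)).symm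
    _ ≤ (Ke ^ (p / q) * ∑' l : Λ, b l ^ p).toReal := ENNReal.toReal_mono hRHSfin hkey
    _ = K ^ (p / q) * ∑' l : Λ, ‖c l‖ ^ p := by
        rw [ENNReal.toReal_mul, ← ENNReal.toReal_rpow, ENNReal.toReal_ofReal hK0, hbE,
          ENNReal.toReal_ofReal
            (tsum_nonneg fun l => Real.rpow_nonneg (norm_nonneg _) _)]

end
end

section
/- Let L ∈ ℕ₀, let 0 < a, 0 < b < c, and let φ⁰, φ¹ ∈ L²(ℝ) be such that their Fourier transforms satisfy φ̂⁰, φ̂¹ ∈ C^L(ℝ), supp φ̂⁰ ⊆ [−a, a] and supp φ̂¹ ⊆ [−c, c] \ (−b, b). For e = (e₁, e₂) ∈ {0,1}² let ψ^e := φ^{e₁} ⊗ φ^{e₂} ∈ L²(ℝ²). Then for every choice of M, N₁, N₂ ∈ ℕ₀ there exists a constant C > 0 such that for every e ∈ {0,1}² with e ≠ (0,0), every j ∈ ℕ₀, every multi-index ρ with |ρ| ≤ L, and every ξ ∈ ℝ²: |∂^ρ ψ̂^e(ξ)| ≤ C · min{1, σ^{−j} + |ξ₁| + |ξ₂|}^M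 · ⟨|ξ|⟩^{−N₁} · ⟨ξ₂⟩^{−N₂} for every σ > 1; and for e = (0,0) the same bound holds with j = 0. (In other words, the wavelet system W(φ⁰, φ¹; σ, τ) is a system of 1-molecules of order (L, ∞, ∞, ∞) with respect to the parametrization Φ^w(e,j,k) = (σ^j, 0, τσ^{−j}k).) -/
open MeasureTheory Real Set
open scoped ENNReal NNReal

noncomputable section

namespace AlphaMolecules

/-- the analyst's bracket `⟨x⟩ = (1+x²)^{1/2}` -/
def brak (x : ℝ) : ℝ := Real.sqrt (1 + x ^ 2)

/-- the Euclidean norm on `ℝ × ℝ` -/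
def nrm (ξ : ℝ × ℝ) : ℝ := Real.sqrt (ξ.1 ^ 2 + ξ.2 ^ 2)

/-- rotation `R_θ` by the angle `θ` -/
def rot (θ : ℝ) (v : ℝ × ℝ) : ℝ × ℝ :=
  (Real.cos θ * v.1 - Real.sin θ * v.2, Real.sin θ * v.1 + Real.cos θ * v.2)

/-- the α-scaling matrix `A_{α,s} = diag(s, s^α)` acting on `ℝ × ℝ` -/
def ascale (α s : ℝ) (v : ℝ × ℝ) : ℝ × ℝ := (s * v.1, s ^ α * v.2)

/-- the 2-dimensional Fourier transform `ĝ(ξ) = ∫ g(x) e^{-2πi x·ξ} dx` -/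
def ft2 (g : ℝ × ℝ → ℂ) (ξ : ℝ × ℝ) : ℂ :=
  ∫ x : ℝ × ℝ, Complex.exp (-2 * Real.pi * Complex.I * (x.1 * ξ.1 + x.2 * ξ.2)) * g x

/-- partial derivative in the first coordinate -/
def pd1 (f : ℝ × ℝ → ℂ) : ℝ × ℝ → ℂ := fun x => fderiv ℝ f x (1, 0)

/-- partial derivative in the second coordinate -/
def pd2 (f : ℝ × ℝ → ℂ) : ℝ × ℝ → ℂ := fun x => fderiv ℝ f x (0, 1)

/-- the iterated partial derivative `∂^ρ` for a multi-index `ρ = (ρ₁, ρ₂)` -/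
def pd (ρ : ℕ × ℕ) (f : ℝ × ℝ → ℂ) : ℝ × ℝ → ℂ := pd1^[ρ.1] (pd2^[ρ.2] f)

/-- `g` satisfies the α-molecule condition at scale `s` with constant `C`
and order `(L, M, N₁, N₂)`. -/
def MoleculeCond (α s C : ℝ) (L : ℕ) (M N₁ N₂ : ℝ) (g : ℝ × ℝ → ℂ) : Prop :=
  ContDiff ℝ L (ft2 g) ∧
  ∀ ρ : ℕ × ℕ, ρ.1 + ρ.2 ≤ L → ∀ ξ : ℝ × ℝ,
    ‖pd ρ (ft2 g) ξ‖ ≤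
      C * (min 1 (s⁻¹ + |ξ.1| + s ^ (-(1 - α)) * |ξ.2|)) ^ M
        * brak (nrm ξ) ^ (-N₁) * brak ξ.2 ^ (-N₂)

/-- the α-molecule `m(x) = s^{(1+α)/2} g(A_{α,s} R_θ (x - x₀))` -/
def mol (α s θ : ℝ) (x₀ : ℝ × ℝ) (g : ℝ × ℝ → ℂ) : ℝ × ℝ → ℂ :=
  fun x => ((s ^ ((1 + α) / 2) : ℝ) : ℂ) * g (ascale α s (rot θ (x - x₀)))

/-- distance between two angles modulo `π` -/
def angDist (a b : ℝ) : ℝ := ⨅ n : ℤ, |a - b + n * Real.pi|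

/-- the quantity `d_α` between two points of the parameter space `ℙ = ℝ₊ × 𝕋 × ℝ²` -/
def dAlpha (α : ℝ) (p q : ℝ × ℝ × (ℝ × ℝ)) : ℝ :=
  (min p.1 q.1) ^ (2 * (1 - α)) * angDist p.2.1 q.2.1 ^ 2
    + (min p.1 q.1) ^ (2 * α) * ((p.2.2.1 - q.2.2.1) ^ 2 + (p.2.2.2 - q.2.2.2) ^ 2)
    + (min p.1 q.1) ^ (2 : ℝ)
        / (1 + (min p.1 q.1) ^ (2 * (1 - α)) * angDist p.2.1 q.2.1 ^ 2)
        * (Real.cos p.2.1 * (p.2.2.1 - q.2.2.1) - Real.sin p.2.1 * (p.2.2.2 - q.2.2.2)) ^ 2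

/-- the α-scaled index distance `ω_α` -/
def omegaAlpha (α : ℝ) (p q : ℝ × ℝ × (ℝ × ℝ)) : ℝ :=
  max (p.1 / q.1) (q.1 / p.1) * (1 + dAlpha α p q)

/-- the `L²(ℝ²)` inner product `⟨f, g⟩ = ∫ f ḡ` -/
def innerL2 (f g : ℝ × ℝ → ℂ) : ℂ := ∫ x : ℝ × ℝ, f x * (starRingEnd ℂ) (g x)

end AlphaMolecules

namespace AlphaMolecules

/-- the 1-dimensional Fourier transform `φ̂(ξ) = ∫ φ(x) e^{-2πixξ} dx` -/
def ft1 (g : ℝ → ℂ) (ξ : ℝ) : ℂ :=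
  ∫ x : ℝ, Complex.exp (-2 * Real.pi * Complex.I * (x * ξ)) * g x

/-- tensor product of two univariate functions -/
def tensor (f g : ℝ → ℂ) : ℝ × ℝ → ℂ := fun x => f x.1 * g x.2

end AlphaMolecules

open AlphaMolecules

section Aux

open MeasureTheory Real Set AlphaMolecules

lemma ft2_tensor (f g : ℝ → ℂ) (ξ : ℝ × ℝ) :
    ft2 (tensor f g) ξ = ft1 f ξ.1 * ft1 g ξ.2 := by
  unfold ft2 ft1 tensor
  rw [MeasureTheory.Measure.volume_eq_prod, ← MeasureTheory.integral_prod_mul]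
  congr 1 with x
  rw [show ((-2:ℂ) * Real.pi * Complex.I * (x.1 * ξ.1 + x.2 * ξ.2)) =
      (-2 * Real.pi * Complex.I * (x.1*ξ.1)) + (-2*Real.pi*Complex.I*(x.2*ξ.2)) by ring,
    Complex.exp_add]
  ring

lemma hasFDerivAt_tensor (u v : ℝ → ℂ) (hu : Differentiable ℝ u) (hv : Differentiable ℝ v)
    (ξ : ℝ × ℝ) :
    HasFDerivAt (fun ξ : ℝ × ℝ => u ξ.1 * v ξ.2)
      ((u ξ.1 • ((fderiv ℝ v ξ.2).comp (ContinuousLinearMap.snd ℝ ℝ ℝ))) +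
       (v ξ.2 • ((fderiv ℝ u ξ.1).comp (ContinuousLinearMap.fst ℝ ℝ ℝ)))) ξ := by
  have h1 : HasFDerivAt (fun ξ : ℝ × ℝ => u ξ.1)
      ((fderiv ℝ u ξ.1).comp (ContinuousLinearMap.fst ℝ ℝ ℝ)) ξ :=
    (hu ξ.1).hasFDerivAt.comp ξ (hasFDerivAt_fst)
  have h2 : HasFDerivAt (fun ξ : ℝ × ℝ => v ξ.2)
      ((fderiv ℝ v ξ.2).comp (ContinuousLinearMap.snd ℝ ℝ ℝ)) ξ :=
    (hv ξ.2).hasFDerivAt.comp ξ (hasFDerivAt_snd)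
  exact h1.mul h2

lemma pd1_tensor (u v : ℝ → ℂ) (hu : Differentiable ℝ u) (hv : Differentiable ℝ v) :
    pd1 (fun ξ : ℝ × ℝ => u ξ.1 * v ξ.2) = fun ξ => deriv u ξ.1 * v ξ.2 := by
  funext ξ
  have h := (hasFDerivAt_tensor u v hu hv ξ).fderiv
  simp only [pd1, h]
  simp [ContinuousLinearMap.add_apply, ContinuousLinearMap.smul_apply,
    ContinuousLinearMap.comp_apply, ← toSpanSingleton_deriv, mul_comm]

lemma pd2_tensor (u v : ℝ → ℂ) (hu : Differentiable ℝ u) (hv : Differentiable ℝ v) :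
    pd2 (fun ξ : ℝ × ℝ => u ξ.1 * v ξ.2) = fun ξ => u ξ.1 * deriv v ξ.2 := by
  funext ξ
  have h := (hasFDerivAt_tensor u v hu hv ξ).fderiv
  simp only [pd2, h]
  simp [ContinuousLinearMap.add_apply, ContinuousLinearMap.smul_apply,
    ContinuousLinearMap.comp_apply, ← toSpanSingleton_deriv, mul_comm]

lemma pd2_iter (L k : ℕ) (u v : ℝ → ℂ) (hu : ContDiff ℝ L u) (hv : ContDiff ℝ L v)
    (hk : k ≤ L) :
    pd2^[k] (fun ξ : ℝ × ℝ => u ξ.1 * v ξ.2) = fun ξ => u ξ.1 * iteratedDeriv k v ξ.2 := by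
  induction k with
  | zero => simp [iteratedDeriv_zero]
  | succ k ih =>
    have hL1 : 1 ≤ L := le_trans (Nat.one_le_iff_ne_zero.mpr (Nat.succ_ne_zero k)) hk
    rw [Function.iterate_succ_apply', ih (le_trans (Nat.le_succ k) hk)]
    rw [pd2_tensor u (iteratedDeriv k v)
      (hu.differentiable (by exact_mod_cast Nat.one_le_iff_ne_zero.mp hL1))
      (hv.differentiable_iteratedDeriv k (by exact_mod_cast hk))]
    funext ξ
    rw [← iteratedDeriv_succ]

lemma pd1_iter (L i : ℕ) (u w : ℝ → ℂ) (hu : ContDiff ℝ L u) (hw : Differentiable ℝ w)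
    (hi : i ≤ L) :
    pd1^[i] (fun ξ : ℝ × ℝ => u ξ.1 * w ξ.2) = fun ξ => iteratedDeriv i u ξ.1 * w ξ.2 := by
  induction i with
  | zero => simp [iteratedDeriv_zero]
  | succ i ih =>
    rw [Function.iterate_succ_apply', ih (le_trans (Nat.le_succ i) hi)]
    rw [pd1_tensor (iteratedDeriv i u) w
      (hu.differentiable_iteratedDeriv i (by exact_mod_cast hi)) hw]
    funext ξ
    rw [← iteratedDeriv_succ]

lemma pd_tensor (L : ℕ) (u v : ℝ → ℂ) (hu : ContDiff ℝ L u) (hv : ContDiff ℝ L v)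
    (ρ : ℕ × ℕ) (hρ : ρ.1 + ρ.2 ≤ L) :
    pd ρ (fun ξ : ℝ × ℝ => u ξ.1 * v ξ.2) =
      fun ξ => iteratedDeriv ρ.1 u ξ.1 * iteratedDeriv ρ.2 v ξ.2 := by
  show pd1^[ρ.1] (pd2^[ρ.2] _) = _
  rw [pd2_iter L ρ.2 u v hu hv (le_trans (Nat.le_add_left _ _) hρ)]
  rcases Nat.eq_zero_or_pos ρ.1 with h0 | hpos
  · rw [h0]
    simp [iteratedDeriv_zero]
  · have hk : ρ.2 < L := lt_of_lt_of_le (Nat.lt_add_of_pos_left hpos) hρ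
    exact pd1_iter L ρ.1 u (iteratedDeriv ρ.2 v) hu
      (hv.differentiable_iteratedDeriv ρ.2 (by exact_mod_cast hk))
      (le_trans (Nat.le_add_right _ _) hρ)

lemma iteratedDeriv_vanish {U : Set ℝ} (hU : IsOpen U) {w : ℝ → ℂ}
    (h0 : ∀ y ∈ U, w y = 0) (m : ℕ) : ∀ x ∈ U, iteratedDeriv m w x = 0 := by
  induction m with
  | zero => simpa using h0
  | succ m ih =>
    intro x hx
    rw [iteratedDeriv_succ]
    have h : iteratedDeriv m w =ᶠ[nhds x] (fun _ => (0 : ℂ)) :=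
      Filter.eventuallyEq_of_mem (hU.mem_nhds hx) (fun y hy => ih y hy)
    rw [h.deriv_eq]
    simp

lemma exists_bound (L : ℕ) (w : ℝ → ℂ) (hw : ContDiff ℝ L w) (R : ℝ)
    (hsupp : Function.support w ⊆ Set.Icc (-R) R) :
    ∃ B > 0, ∀ m ≤ L, ∀ x, ‖iteratedDeriv m w x‖ ≤ B := by
  have hcs0 : HasCompactSupport w :=
    HasCompactSupport.intro isCompact_Icc (fun x hx => by
      by_contra h; exact hx (hsupp h))
  have hcs : ∀ m : ℕ, HasCompactSupport (iteratedDeriv m w) := by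
    intro m
    induction m with
    | zero => simpa [iteratedDeriv_zero] using hcs0
    | succ m ih => rw [iteratedDeriv_succ]; exact ih.deriv
  have H : ∀ m : ℕ, m ≤ L → ∃ C : ℝ, ∀ x, ‖iteratedDeriv m w x‖ ≤ C := by
    intro m hm
    exact (hw.continuous_iteratedDeriv m (by exact_mod_cast hm)).bounded_above_of_compact_support
      (hcs m)
  choose! Cf hCf using H
  refine ⟨1 + ∑ m ∈ Finset.range (L + 1), max (Cf m) 0, ?_, ?_⟩
  · have : (0 : ℝ) ≤ ∑ m ∈ Finset.range (L + 1), max (Cf m) 0 :=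
      Finset.sum_nonneg (fun m _ => le_max_right _ _)
    linarith
  · intro m hm x
    have h1 : ‖iteratedDeriv m w x‖ ≤ Cf m := hCf m hm x
    have h2 : max (Cf m) 0 ≤ ∑ m ∈ Finset.range (L + 1), max (Cf m) 0 :=
      Finset.single_le_sum (f := fun m => max (Cf m) 0)
        (fun i _ => le_max_right _ _) (Finset.mem_range.mpr (Nat.lt_succ_of_le hm))
    calc ‖iteratedDeriv m w x‖ ≤ Cf m := h1
      _ ≤ max (Cf m) 0 := le_max_left _ _
      _ ≤ ∑ m ∈ Finset.range (L + 1), max (Cf m) 0 := h2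
      _ ≤ 1 + ∑ m ∈ Finset.range (L + 1), max (Cf m) 0 := by linarith

lemma one_le_brak (x : ℝ) : 1 ≤ brak x := by
  rw [brak]
  calc (1:ℝ) = Real.sqrt 1 := Real.sqrt_one.symm
    _ ≤ Real.sqrt (1 + x ^ 2) := Real.sqrt_le_sqrt (by nlinarith [sq_nonneg x])

lemma core (L M N₁ N₂ : ℕ) (b c' : ℝ) (hb : 0 < b)
    (u v : ℝ → ℂ) (hu : ContDiff ℝ L u) (hv : ContDiff ℝ L v)
    (hus : Function.support u ⊆ Set.Icc (-c') c')
    (hvs : Function.support v ⊆ Set.Icc (-c') c')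
    (Bu Bv : ℝ) (hBupos : 0 < Bu) (hBvpos : 0 < Bv)
    (hBu : ∀ m ≤ L, ∀ x, ‖iteratedDeriv m u x‖ ≤ Bu)
    (hBv : ∀ m ≤ L, ∀ x, ‖iteratedDeriv m v x‖ ≤ Bv)
    (t : ℝ) (ht : 0 < t)
    (hlow : 1 ≤ t ∨ (∀ y ∈ Set.Ioo (-b) b, u y = 0) ∨ (∀ y ∈ Set.Ioo (-b) b, v y = 0))
    (ρ : ℕ × ℕ) (hρ : ρ.1 + ρ.2 ≤ L) (ξ : ℝ × ℝ) :
    ‖iteratedDeriv ρ.1 u ξ.1 * iteratedDeriv ρ.2 v ξ.2‖ ≤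
      (Bu * Bv * (min 1 b) ^ (-(M : ℝ)) * Real.sqrt (1 + 2 * c' ^ 2) ^ (N₁ : ℝ)
        * Real.sqrt (1 + c' ^ 2) ^ (N₂ : ℝ))
        * (min 1 (t + |ξ.1| + |ξ.2|)) ^ (M : ℝ)
        * brak (nrm ξ) ^ (-(N₁ : ℝ)) * brak ξ.2 ^ (-(N₂ : ℝ)) := by
  have hμpos : (0:ℝ) < min 1 b := lt_min one_pos hb
  have hK1pos : (0:ℝ) < Real.sqrt (1 + 2 * c' ^ 2) := Real.sqrt_pos.mpr (by positivity)
  have hK2pos : (0:ℝ) < Real.sqrt (1 + c' ^ 2) := Real.sqrt_pos.mpr (by positivity)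
  have hmpos : (0:ℝ) < min 1 (t + |ξ.1| + |ξ.2|) :=
    lt_min one_pos (by have := abs_nonneg ξ.1; have := abs_nonneg ξ.2; linarith)
  have hbrak1pos : (0:ℝ) < brak (nrm ξ) := lt_of_lt_of_le one_pos (one_le_brak _)
  have hbrak2pos : (0:ℝ) < brak ξ.2 := lt_of_lt_of_le one_pos (one_le_brak _)
  by_cases hV : iteratedDeriv ρ.1 u ξ.1 = 0 ∨ iteratedDeriv ρ.2 v ξ.2 = 0
  · have : iteratedDeriv ρ.1 u ξ.1 * iteratedDeriv ρ.2 v ξ.2 = 0 := by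
      rcases hV with h | h <;> rw [h] <;> ring
    rw [this, norm_zero]
    have h1 : (0:ℝ) ≤ (Bu * Bv * (min 1 b) ^ (-(M : ℝ))
        * Real.sqrt (1 + 2 * c' ^ 2) ^ (N₁ : ℝ) * Real.sqrt (1 + c' ^ 2) ^ (N₂ : ℝ)) := by
      apply mul_nonneg; apply mul_nonneg; apply mul_nonneg
      · exact mul_nonneg hBupos.le hBvpos.le
      · exact Real.rpow_nonneg hμpos.le _
      · exact Real.rpow_nonneg hK1pos.le _
      · exact Real.rpow_nonneg hK2pos.le _
    apply mul_nonneg; apply mul_nonneg; apply mul_nonneg h1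
    · exact Real.rpow_nonneg hmpos.le _
    · exact Real.rpow_nonneg hbrak1pos.le _
    · exact Real.rpow_nonneg hbrak2pos.le _
  · push_neg at hV
    obtain ⟨hV1, hV2⟩ := hV
    have hvan : ∀ (w : ℝ → ℂ), Function.support w ⊆ Set.Icc (-c') c' →
        ∀ m x, iteratedDeriv m w x ≠ 0 → x ∈ Set.Icc (-c') c' := by
      intro w hws m x hne
      by_contra hmem
      exact hne (iteratedDeriv_vanish (isOpen_compl_iff.mpr isClosed_Icc)
        (fun y hy => by by_contra h; exact hy (hws h)) m x hmem)
    have hx1 : |ξ.1| ≤ c' := abs_le.mpr ⟨(hvan u hus ρ.1 ξ.1 hV1).1, (hvan u hus ρ.1 ξ.1 hV1).2⟩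
    have hx2 : |ξ.2| ≤ c' := abs_le.mpr ⟨(hvan v hvs ρ.2 ξ.2 hV2).1, (hvan v hvs ρ.2 ξ.2 hV2).2⟩
    have hmin : min 1 b ≤ min 1 (t + |ξ.1| + |ξ.2|) := by
      have habs1 := abs_nonneg ξ.1
      have habs2 := abs_nonneg ξ.2
      rcases hlow with h | h | h
      · calc min 1 b ≤ 1 := min_le_left _ _
          _ ≤ min 1 (t + |ξ.1| + |ξ.2|) := le_min le_rfl (by linarith)
      · have hb1 : b ≤ |ξ.1| := by
          by_contra hlt
          push_neg at hlt
          have hmem : ξ.1 ∈ Set.Ioo (-b) b := by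
            constructor
            · nlinarith [neg_abs_le ξ.1]
            · nlinarith [le_abs_self ξ.1]
          exact hV1 (iteratedDeriv_vanish isOpen_Ioo h ρ.1 ξ.1 hmem)
        exact min_le_min le_rfl (by linarith)
      · have hb2 : b ≤ |ξ.2| := by
          by_contra hlt
          push_neg at hlt
          have hmem : ξ.2 ∈ Set.Ioo (-b) b := by
            constructor
            · nlinarith [neg_abs_le ξ.2]
            · nlinarith [le_abs_self ξ.2]
          exact hV2 (iteratedDeriv_vanish isOpen_Ioo h ρ.2 ξ.2 hmem)
        exact min_le_min le_rfl (by linarith)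
    have hbr1 : brak (nrm ξ) ≤ Real.sqrt (1 + 2 * c' ^ 2) := by
      rw [brak, nrm, Real.sq_sqrt (by positivity)]
      apply Real.sqrt_le_sqrt
      nlinarith [sq_abs ξ.1, sq_abs ξ.2, abs_nonneg ξ.1, abs_nonneg ξ.2]
    have hbr2 : brak ξ.2 ≤ Real.sqrt (1 + c' ^ 2) := by
      rw [brak]
      apply Real.sqrt_le_sqrt
      nlinarith [sq_abs ξ.2, abs_nonneg ξ.2]
    have h1 : (1:ℝ) ≤ (min 1 b) ^ (-(M : ℝ)) * (min 1 (t + |ξ.1| + |ξ.2|)) ^ (M : ℝ) := by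
      calc (1:ℝ) = (min 1 b) ^ (-(M : ℝ)) * (min 1 b) ^ (M : ℝ) := by
            rw [← Real.rpow_add hμpos]; simp
        _ ≤ _ := by
            apply mul_le_mul_of_nonneg_left _ (Real.rpow_nonneg hμpos.le _)
            exact Real.rpow_le_rpow hμpos.le hmin (Nat.cast_nonneg M)
    have h2 : (1:ℝ) ≤ Real.sqrt (1 + 2 * c' ^ 2) ^ (N₁ : ℝ) * brak (nrm ξ) ^ (-(N₁ : ℝ)) := by
      calc (1:ℝ) = Real.sqrt (1 + 2 * c' ^ 2) ^ (N₁ : ℝ)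
            * Real.sqrt (1 + 2 * c' ^ 2) ^ (-(N₁ : ℝ)) := by
            rw [← Real.rpow_add hK1pos]; simp
        _ ≤ _ := by
            apply mul_le_mul_of_nonneg_left _ (Real.rpow_nonneg hK1pos.le _)
            exact Real.rpow_le_rpow_of_nonpos hbrak1pos hbr1
              (neg_nonpos.mpr (Nat.cast_nonneg N₁))
    have h3 : (1:ℝ) ≤ Real.sqrt (1 + c' ^ 2) ^ (N₂ : ℝ) * brak ξ.2 ^ (-(N₂ : ℝ)) := by
      calc (1:ℝ) = Real.sqrt (1 + c' ^ 2) ^ (N₂ : ℝ)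
            * Real.sqrt (1 + c' ^ 2) ^ (-(N₂ : ℝ)) := by
            rw [← Real.rpow_add hK2pos]; simp
        _ ≤ _ := by
            apply mul_le_mul_of_nonneg_left _ (Real.rpow_nonneg hK2pos.le _)
            exact Real.rpow_le_rpow_of_nonpos hbrak2pos hbr2
              (neg_nonpos.mpr (Nat.cast_nonneg N₂))
    have hBB : ‖iteratedDeriv ρ.1 u ξ.1 * iteratedDeriv ρ.2 v ξ.2‖ ≤ Bu * Bv := by
      rw [norm_mul]
      exact mul_le_mul (hBu ρ.1 (le_trans (Nat.le_add_right _ _) hρ) ξ.1)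
        (hBv ρ.2 (le_trans (Nat.le_add_left _ _) hρ) ξ.2) (norm_nonneg _) hBupos.le
    calc ‖iteratedDeriv ρ.1 u ξ.1 * iteratedDeriv ρ.2 v ξ.2‖ ≤ Bu * Bv := hBB
      _ = (Bu * Bv) * 1 * 1 * 1 := by ring
      _ ≤ (Bu * Bv) * ((min 1 b) ^ (-(M : ℝ)) * (min 1 (t + |ξ.1| + |ξ.2|)) ^ (M : ℝ))
          * (Real.sqrt (1 + 2 * c' ^ 2) ^ (N₁ : ℝ) * brak (nrm ξ) ^ (-(N₁ : ℝ)))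
          * (Real.sqrt (1 + c' ^ 2) ^ (N₂ : ℝ) * brak ξ.2 ^ (-(N₂ : ℝ))) := by
          have hBB0 : (0:ℝ) ≤ Bu * Bv := mul_nonneg hBupos.le hBvpos.le
          gcongr <;> first | exact h1 | exact h2 | exact h3 | positivity
      _ = _ := by ring

end Aux


/-- Proposition 3.1: a Lemarié–Meyer type wavelet system built from
band-limited generators `φ⁰, φ¹` is a system of `1`-molecules of order `(L, ∞, ∞, ∞)`:
for every `M, N₁, N₂` there is a constant `C` such that the generators
`ψ^e = φ^{e₁} ⊗ φ^{e₂}` satisfy the molecule estimate at every scale `σ^j`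
(with `j = 0` in the coarse-scale case `e = (0,0)`). -/
theorem stmt13 (L : ℕ) (a b c : ℝ) (ha : 0 < a) (hb : 0 < b) (hbc : b < c)
    (φ0 φ1 : ℝ → ℂ)
    (h0L2 : MemLp φ0 2 (volume : Measure ℝ)) (h1L2 : MemLp φ1 2 (volume : Measure ℝ))
    (h0smooth : ContDiff ℝ L (ft1 φ0)) (h1smooth : ContDiff ℝ L (ft1 φ1))
    (h0supp : Function.support (ft1 φ0) ⊆ Set.Icc (-a) a)
    (h1supp : Function.support (ft1 φ1) ⊆ Set.Icc (-c) c \ Set.Ioo (-b) b) :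
    ∀ M N₁ N₂ : ℕ, ∃ C > (0 : ℝ),
      ∀ (e : Bool × Bool) (j : ℕ), (e = (false, false) → j = 0) →
      ∀ σ : ℝ, 1 < σ → ∀ ρ : ℕ × ℕ, ρ.1 + ρ.2 ≤ L → ∀ ξ : ℝ × ℝ,
        ‖pd ρ (ft2 (tensor (if e.1 then φ1 else φ0) (if e.2 then φ1 else φ0))) ξ‖
          ≤ C * (min 1 (σ ^ (-(j : ℝ)) + |ξ.1| + |ξ.2|)) ^ (M : ℝ)
              * brak (nrm ξ) ^ (-(N₁ : ℝ)) * brak ξ.2 ^ (-(N₂ : ℝ)) := by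
  intro M N₁ N₂
  have hc'a : a ≤ max a c := le_max_left a c
  have hc'c : c ≤ max a c := le_max_right a c
  have hc'pos : 0 < max a c := lt_of_lt_of_le ha hc'a
  have hsupp0 : Function.support (ft1 φ0) ⊆ Set.Icc (-(max a c)) (max a c) :=
    h0supp.trans (Set.Icc_subset_Icc (neg_le_neg hc'a) hc'a)
  have hsupp1 : Function.support (ft1 φ1) ⊆ Set.Icc (-(max a c)) (max a c) :=
    fun x hx => Set.Icc_subset_Icc (neg_le_neg hc'c) hc'c (h1supp hx).1
  obtain ⟨B0, hB0pos, hB0⟩ := exists_bound L (ft1 φ0) h0smooth (max a c) hsupp0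
  obtain ⟨B1, hB1pos, hB1⟩ := exists_bound L (ft1 φ1) h1smooth (max a c) hsupp1
  have hBpos : 0 < max B0 B1 := lt_of_lt_of_le hB0pos (le_max_left _ _)
  have hB0' : ∀ m ≤ L, ∀ x, ‖iteratedDeriv m (ft1 φ0) x‖ ≤ max B0 B1 :=
    fun m hm x => le_trans (hB0 m hm x) (le_max_left _ _)
  have hB1' : ∀ m ≤ L, ∀ x, ‖iteratedDeriv m (ft1 φ1) x‖ ≤ max B0 B1 :=
    fun m hm x => le_trans (hB1 m hm x) (le_max_right _ _)
  have hμpos : (0:ℝ) < min 1 b := lt_min one_pos hb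
  have hK1pos : (0:ℝ) < Real.sqrt (1 + 2 * (max a c) ^ 2) := Real.sqrt_pos.mpr (by positivity)
  have hK2pos : (0:ℝ) < Real.sqrt (1 + (max a c) ^ 2) := Real.sqrt_pos.mpr (by positivity)
  refine ⟨max B0 B1 * max B0 B1 * (min 1 b) ^ (-(M : ℝ))
      * Real.sqrt (1 + 2 * (max a c) ^ 2) ^ (N₁ : ℝ)
      * Real.sqrt (1 + (max a c) ^ 2) ^ (N₂ : ℝ), ?_, ?_⟩
  · apply mul_pos; apply mul_pos; apply mul_pos
    · exact mul_pos hBpos hBpos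
    · exact Real.rpow_pos_of_pos hμpos _
    · exact Real.rpow_pos_of_pos hK1pos _
    · exact Real.rpow_pos_of_pos hK2pos _
  · intro e j hj σ hσ ρ hρ ξ
    have ht : (0:ℝ) < σ ^ (-(j : ℝ)) := Real.rpow_pos_of_pos (lt_trans one_pos hσ) _
    have hzero1 : ∀ y ∈ Set.Ioo (-b) b, ft1 φ1 y = 0 := by
      intro y hy
      by_contra h
      exact (h1supp h).2 hy
    obtain ⟨e1, e2⟩ := e
    cases e1 <;> cases e2
    · have hj0 : j = 0 := hj rfl
      have htone : (1:ℝ) ≤ σ ^ (-(j : ℝ)) := by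
        rw [hj0]; simp
      simp only [Bool.false_eq_true, if_false]
      rw [show ft2 (tensor φ0 φ0) = fun ξ : ℝ × ℝ => ft1 φ0 ξ.1 * ft1 φ0 ξ.2 from
        funext (ft2_tensor φ0 φ0)]
      rw [pd_tensor L (ft1 φ0) (ft1 φ0) h0smooth h0smooth ρ hρ]
      exact core L M N₁ N₂ b (max a c) hb (ft1 φ0) (ft1 φ0) h0smooth h0smooth hsupp0 hsupp0
        (max B0 B1) (max B0 B1) hBpos hBpos hB0' hB0' _ ht (Or.inl htone) ρ hρ ξ
    · simp only [Bool.false_eq_true, if_false, if_true]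
      rw [show ft2 (tensor φ0 φ1) = fun ξ : ℝ × ℝ => ft1 φ0 ξ.1 * ft1 φ1 ξ.2 from
        funext (ft2_tensor φ0 φ1)]
      rw [pd_tensor L (ft1 φ0) (ft1 φ1) h0smooth h1smooth ρ hρ]
      exact core L M N₁ N₂ b (max a c) hb (ft1 φ0) (ft1 φ1) h0smooth h1smooth hsupp0 hsupp1
        (max B0 B1) (max B0 B1) hBpos hBpos hB0' hB1' _ ht (Or.inr (Or.inr hzero1)) ρ hρ ξ
    · simp only [Bool.false_eq_true, if_false, if_true]
      rw [show ft2 (tensor φ1 φ0) = fun ξ : ℝ × ℝ => ft1 φ1 ξ.1 * ft1 φ0 ξ.2 from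
        funext (ft2_tensor φ1 φ0)]
      rw [pd_tensor L (ft1 φ1) (ft1 φ0) h1smooth h0smooth ρ hρ]
      exact core L M N₁ N₂ b (max a c) hb (ft1 φ1) (ft1 φ0) h1smooth h0smooth hsupp1 hsupp0
        (max B0 B1) (max B0 B1) hBpos hBpos hB1' hB0' _ ht (Or.inr (Or.inl hzero1)) ρ hρ ξ
    · simp only [if_true]
      rw [show ft2 (tensor φ1 φ1) = fun ξ : ℝ × ℝ => ft1 φ1 ξ.1 * ft1 φ1 ξ.2 from
        funext (ft2_tensor φ1 φ1)]
      rw [pd_tensor L (ft1 φ1) (ft1 φ1) h1smooth h1smooth ρ hρ]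
      exact core L M N₁ N₂ b (max a c) hb (ft1 φ1) (ft1 φ1) h1smooth h1smooth hsupp1 hsupp1
        (max B0 B1) (max B0 B1) hBpos hBpos hB1' hB1' _ ht (Or.inr (Or.inl hzero1)) ρ hρ ξ
end
end

section
/- Let α ∈ [0,1], B > 0, C > 0 and L, M, N₁, N₂ ∈ ℕ₀. Then there exists a constant C' > 0, depending only on α, B, C, L, M, N₁, N₂, with the following property. Let s ≥ 1, let h ∈ ℝ with |h| ≤ B, and set θ := arctan(−h). Let γ̂ : ℝ² → ℂ be L-times continuously differentiable with |∂^ρ γ̂(ξ)| ≤ C · min{1, s^{−1} + |ξ₁| + s^{−(1−α)}|ξ₂|}^M · ⟨|ξ|⟩^{−N₁} · ⟨ξ₂⟩^{−N₂} for all |ρ| ≤ L and all ξ ∈ ℝ². Then the function ĝ(ξ) := γ̂(A_{α,s^{−1}} (S_h)^{−T} R_θ^T A_{α,s} ξ) satisfies |∂^ρ ĝ(ξ)| ≤ C' · min{1, s^{−1} + |ξ₁| + s^{−(1−α)}|ξ₂|}^M · ⟨|ξ|⟩^{−N₁} · ⟨ξ₂⟩^{−N₂} for all |ρ| ≤ L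 and all ξ ∈ ℝ². (This is the key estimate showing that α-shearlet molecules are α-molecules of the same order.) -/
open MeasureTheory Real Set
open scoped ENNReal NNReal

noncomputable section

namespace AlphaMolecules

/-- the inverse transpose of the shear matrix, `(S_h)^{-T} v = (v₁, -h·v₁ + v₂)` -/
def shearInvT (h : ℝ) (v : ℝ × ℝ) : ℝ × ℝ := (v.1, -h * v.1 + v.2)

end AlphaMolecules


namespace AlphaMolecules
namespace Aux

lemma contDiff_pd1 {f : ℝ × ℝ → ℂ} {n : ℕ} (hf : ContDiff ℝ (n + 1 : ℕ) f) :
    ContDiff ℝ (n : ℕ) (pd1 f) := by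
  have h1 : ContDiff ℝ (n : ℕ) (fderiv ℝ f) := hf.fderiv_right (by exact_mod_cast le_refl _)
  exact h1.clm_apply contDiff_const

lemma contDiff_pd2 {f : ℝ × ℝ → ℂ} {n : ℕ} (hf : ContDiff ℝ (n + 1 : ℕ) f) :
    ContDiff ℝ (n : ℕ) (pd2 f) := by
  have h1 : ContDiff ℝ (n : ℕ) (fderiv ℝ f) := hf.fderiv_right (by exact_mod_cast le_refl _)
  exact h1.clm_apply contDiff_const

lemma contDiff_pd1_iter {k : ℕ} : ∀ {n : ℕ} {f : ℝ × ℝ → ℂ},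
    ContDiff ℝ (n + k : ℕ) f → ContDiff ℝ (n : ℕ) (pd1^[k] f) := by
  induction k with
  | zero => intro n f hf; simpa using hf
  | succ k ih =>
      intro n f hf
      rw [Function.iterate_succ_apply]
      exact ih (contDiff_pd1 hf)

lemma contDiff_pd2_iter {k : ℕ} : ∀ {n : ℕ} {f : ℝ × ℝ → ℂ},
    ContDiff ℝ (n + k : ℕ) f → ContDiff ℝ (n : ℕ) (pd2^[k] f) := by
  induction k with
  | zero => intro n f hf; simpa using hf
  | succ k ih =>
      intro n f hf
      rw [Function.iterate_succ_apply]
      exact ih (contDiff_pd2 hf)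

lemma contDiff_pd {n k j : ℕ} {f : ℝ × ℝ → ℂ} (hf : ContDiff ℝ (n + k + j : ℕ) f) :
    ContDiff ℝ (n : ℕ) (pd (k, j) f) :=
  contDiff_pd1_iter (contDiff_pd2_iter hf)

lemma fderiv_apply_const {g : ℝ × ℝ → ℂ} {x : ℝ × ℝ} (v w : ℝ × ℝ)
    (hg : DifferentiableAt ℝ (fderiv ℝ g) x) :
    fderiv ℝ (fun y => fderiv ℝ g y v) x w = fderiv ℝ (fderiv ℝ g) x w v := by
  rw [fderiv_clm_apply hg (differentiableAt_const v)]
  simp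

lemma schwarz {g : ℝ × ℝ → ℂ} (hg : ContDiff ℝ 2 g) : pd1 (pd2 g) = pd2 (pd1 g) := by
  funext x
  have hd : DifferentiableAt ℝ (fderiv ℝ g) x := by
    have : ContDiff ℝ (1 : ℕ) (fderiv ℝ g) := hg.fderiv_right (by norm_num)
    exact this.differentiable (by norm_num) x
  have hsymm : IsSymmSndFDerivAt ℝ g x :=
    (hg.contDiffAt).isSymmSndFDerivAt (by norm_num)
  show fderiv ℝ (fun y => fderiv ℝ g y (0,1)) x (1,0) = fderiv ℝ (fun y => fderiv ℝ g y (1,0)) x (0,1)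
  rw [fderiv_apply_const _ _ hd, fderiv_apply_const _ _ hd]
  exact hsymm (1,0) (0,1)

lemma pd2_pd1_iter {k : ℕ} : ∀ {g : ℝ × ℝ → ℂ}, ContDiff ℝ (k + 1 : ℕ) g →
    pd2 (pd1^[k] g) = pd1^[k] (pd2 g) := by
  induction k with
  | zero => intro g _; simp
  | succ k ih =>
      intro g hg
      have h2 : ContDiff ℝ 2 g := hg.of_le (by exact_mod_cast by omega)
      rw [Function.iterate_succ_apply, ih (contDiff_pd1 hg), ← schwarz h2,
        ← Function.iterate_succ_apply]

/-- the upper-triangular linear map `(x,y) ↦ (a x + b y, d y)` -/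
def T (a b d : ℝ) : (ℝ × ℝ) →L[ℝ] (ℝ × ℝ) :=
  (a • ContinuousLinearMap.fst ℝ ℝ ℝ + b • ContinuousLinearMap.snd ℝ ℝ ℝ).prod
    (d • ContinuousLinearMap.snd ℝ ℝ ℝ)

@[simp] lemma T_apply (a b d : ℝ) (x : ℝ × ℝ) :
    T a b d x = (a * x.1 + b * x.2, d * x.2) := by
  simp [T, ContinuousLinearMap.prod_apply]

lemma pd1_comp (a b d : ℝ) {f : ℝ × ℝ → ℂ} {x : ℝ × ℝ}
    (hf : DifferentiableAt ℝ f (T a b d x)) :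
    pd1 (fun y => f (T a b d y)) x = (a : ℂ) * pd1 f (T a b d x) := by
  have h : fderiv ℝ (f ∘ (T a b d)) x = (fderiv ℝ f (T a b d x)).comp (T a b d) := by
    rw [fderiv_comp x hf (T a b d).differentiableAt, (T a b d).fderiv]
  show fderiv ℝ (f ∘ (T a b d)) x (1, 0) = _
  rw [h]
  calc (fderiv ℝ f (T a b d x)).comp (T a b d) (1, 0)
      = fderiv ℝ f (T a b d x) (a • ((1:ℝ), (0:ℝ))) := by
        simp [Prod.smul_mk]
    _ = a • fderiv ℝ f (T a b d x) ((1:ℝ), (0:ℝ)) := (fderiv ℝ f _).map_smul a _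
    _ = (a : ℂ) * pd1 f (T a b d x) := by rw [Complex.real_smul]; rfl

lemma pd2_comp (a b d : ℝ) {f : ℝ × ℝ → ℂ} {x : ℝ × ℝ}
    (hf : DifferentiableAt ℝ f (T a b d x)) :
    pd2 (fun y => f (T a b d y)) x
      = (b : ℂ) * pd1 f (T a b d x) + (d : ℂ) * pd2 f (T a b d x) := by
  have h : fderiv ℝ (f ∘ (T a b d)) x = (fderiv ℝ f (T a b d x)).comp (T a b d) := by
    rw [fderiv_comp x hf (T a b d).differentiableAt, (T a b d).fderiv]
  show fderiv ℝ (f ∘ (T a b d)) x (0, 1) = _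
  rw [h]
  calc (fderiv ℝ f (T a b d x)).comp (T a b d) (0, 1)
      = fderiv ℝ f (T a b d x) (b • ((1:ℝ), (0:ℝ)) + d • ((0:ℝ), (1:ℝ))) := by
        simp [Prod.smul_mk]
    _ = b • fderiv ℝ f (T a b d x) ((1:ℝ), (0:ℝ)) + d • fderiv ℝ f (T a b d x) ((0:ℝ), (1:ℝ)) := by
        rw [map_add]; rw [(fderiv ℝ f _).map_smul, (fderiv ℝ f _).map_smul]
    _ = (b : ℂ) * pd1 f (T a b d x) + (d : ℂ) * pd2 f (T a b d x) := by
        rw [Complex.real_smul, Complex.real_smul]; rfl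

lemma pd2_sum {n : ℕ} (g : ℕ → (ℝ × ℝ) → ℂ) {x : ℝ × ℝ}
    (hg : ∀ i ∈ Finset.range n, DifferentiableAt ℝ (g i) x) :
    pd2 (fun y => ∑ i ∈ Finset.range n, g i y) x = ∑ i ∈ Finset.range n, pd2 (g i) x := by
  show fderiv ℝ (fun y => ∑ i ∈ Finset.range n, g i y) x (0,1) = _
  rw [fderiv_fun_sum hg]
  simp [pd2]

lemma pd1_sum {n : ℕ} (g : ℕ → (ℝ × ℝ) → ℂ) {x : ℝ × ℝ}
    (hg : ∀ i ∈ Finset.range n, DifferentiableAt ℝ (g i) x) :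
    pd1 (fun y => ∑ i ∈ Finset.range n, g i y) x = ∑ i ∈ Finset.range n, pd1 (g i) x := by
  show fderiv ℝ (fun y => ∑ i ∈ Finset.range n, g i y) x (1,0) = _
  rw [fderiv_fun_sum hg]
  simp [pd1]

lemma pd1_const_mul (c : ℂ) {g : ℝ × ℝ → ℂ} {x : ℝ × ℝ} (hg : DifferentiableAt ℝ g x) :
    pd1 (fun y => c * g y) x = c * pd1 g x := by
  show fderiv ℝ (fun y => c * g y) x (1,0) = _
  rw [fderiv_const_mul hg]
  simp [pd1]

lemma pd2_const_mul (c : ℂ) {g : ℝ × ℝ → ℂ} {x : ℝ × ℝ} (hg : DifferentiableAt ℝ g x) :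
    pd2 (fun y => c * g y) x = c * pd2 g x := by
  show fderiv ℝ (fun y => c * g y) x (0,1) = _
  rw [fderiv_const_mul hg]
  simp [pd2]

lemma pd1_pd (i j : ℕ) (f : ℝ × ℝ → ℂ) : pd1 (pd (i, j) f) = pd (i + 1, j) f := by
  show pd1 (pd1^[i] (pd2^[j] f)) = pd1^[i+1] (pd2^[j] f)
  rw [Function.iterate_succ_apply']

lemma pd2_pd (i j : ℕ) {f : ℝ × ℝ → ℂ} (hf : ContDiff ℝ ((i + 1) + j : ℕ) f) :
    pd2 (pd (i, j) f) = pd (i, j + 1) f := by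
  show pd2 (pd1^[i] (pd2^[j] f)) = pd1^[i] (pd2^[j+1] f)
  rw [pd2_pd1_iter (contDiff_pd2_iter hf), ← Function.iterate_succ_apply' pd2]

lemma diff_pd {L : ℕ} {f : ℝ × ℝ → ℂ} (hf : ContDiff ℝ (L : ℕ) f) {i j : ℕ}
    (hij : i + j + 1 ≤ L) : Differentiable ℝ (pd (i, j) f) := by
  have h1 : ContDiff ℝ (1 : ℕ) (pd (i, j) f) := by
    apply contDiff_pd (n := 1)
    refine hf.of_le ?_
    have h' : ((1 + i + j : ℕ) : WithTop ℕ∞) ≤ ((L : ℕ) : WithTop ℕ∞) :=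
      Nat.cast_le.mpr (by omega)
    exact_mod_cast h'
  exact h1.differentiable (by norm_num)

lemma pd2_iter_expand (a b d : ℝ) {L : ℕ} {f : ℝ × ℝ → ℂ} (hf : ContDiff ℝ (L : ℕ) f)
    (m : ℕ) (hm : m ≤ L) :
    ∃ c : ℕ → ℝ, (∀ k, |c k| ≤ (|b| + |d|) ^ m) ∧ (∀ k, m < k → c k = 0) ∧
      ∀ x, pd2^[m] (fun y => f (T a b d y)) x
        = ∑ k ∈ Finset.range (m + 1), (c k : ℂ) * pd (k, m - k) f (T a b d x) := by
  induction m with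
  | zero =>
      refine ⟨fun k => if k = 0 then 1 else 0, ?_, ?_, ?_⟩
      · intro k; rcases eq_or_ne k 0 with h | h <;> simp [h]
      · intro k hk
        have : k ≠ 0 := by omega
        simp [this]
      · intro x; simp [pd]
  | succ m ih =>
      obtain ⟨c, hbd, hvan, hexp⟩ := ih (by omega)
      have habs : (0:ℝ) ≤ (|b| + |d|) ^ m := by positivity
      refine ⟨fun j => d * c j + b * (if j = 0 then 0 else c (j - 1)), ?_, ?_, ?_⟩
      · intro j
        have h1 : |d * c j| ≤ |d| * (|b| + |d|) ^ m := by
          rw [abs_mul]; exact mul_le_mul_of_nonneg_left (hbd j) (abs_nonneg d)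
        have h2 : |b * (if j = 0 then 0 else c (j - 1))| ≤ |b| * (|b| + |d|) ^ m := by
          rw [abs_mul]
          refine mul_le_mul_of_nonneg_left ?_ (abs_nonneg b)
          rcases eq_or_ne j 0 with h | h
          · simp [h, habs]
          · simpa [h] using hbd (j - 1)
        calc |d * c j + b * (if j = 0 then 0 else c (j - 1))|
            ≤ |d * c j| + |b * (if j = 0 then 0 else c (j - 1))| := abs_add_le _ _
          _ ≤ |d| * (|b| + |d|) ^ m + |b| * (|b| + |d|) ^ m := add_le_add h1 h2
          _ = (|b| + |d|) ^ (m + 1) := by ring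
      · intro j hj
        have hj0 : j ≠ 0 := by omega
        simp only [hj0, if_false]
        rw [hvan j (by omega), hvan (j - 1) (by omega)]
        ring
      · intro x
        have hdiffk : ∀ k, k ≤ m → Differentiable ℝ (pd (k, m - k) f) := fun k hk =>
          diff_pd hf (by omega)
        have hdsummand : ∀ i ∈ Finset.range (m + 1),
            DifferentiableAt ℝ (fun y => (c i : ℂ) * pd (i, m - i) f (T a b d y)) x := by
          intro i hi
          have hi' : i ≤ m := by simpa using Nat.lt_succ_iff.mp (Finset.mem_range.mp hi)
          have hcomp : DifferentiableAt ℝ (fun y => pd (i, m - i) f (T a b d y)) x :=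
            ((hdiffk i hi').comp (T a b d).differentiable).differentiableAt
          exact hcomp.const_mul _
        rw [Function.iterate_succ_apply']
        have hfun : pd2^[m] (fun y => f (T a b d y))
            = fun y => ∑ k ∈ Finset.range (m + 1), (c k : ℂ) * pd (k, m - k) f (T a b d y) :=
          funext hexp
        rw [hfun, pd2_sum _ hdsummand]
        have hterm : ∀ k ∈ Finset.range (m + 1),
            pd2 (fun y => (c k : ℂ) * pd (k, m - k) f (T a b d y)) x
              = (c k : ℂ) * ((b : ℂ) * pd (k + 1, m - k) f (T a b d x)
                  + (d : ℂ) * pd (k, m - k + 1) f (T a b d x)) := by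
          intro k hk
          have hk' : k ≤ m := Nat.lt_succ_iff.mp (Finset.mem_range.mp hk)
          have hcomp : DifferentiableAt ℝ (fun y => pd (k, m - k) f (T a b d y)) x :=
            ((hdiffk k hk').comp (T a b d).differentiable).differentiableAt
          rw [pd2_const_mul _ hcomp, pd2_comp a b d ((hdiffk k hk') _), pd1_pd, pd2_pd]
          refine hf.of_le ?_
          have h' : (((k + 1) + (m - k) : ℕ) : WithTop ℕ∞) ≤ ((L : ℕ) : WithTop ℕ∞) :=
            Nat.cast_le.mpr (by omega)
          exact_mod_cast h'
        rw [Finset.sum_congr rfl hterm]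
        -- now the reindexing
        have lhs_split : ∑ k ∈ Finset.range (m + 1),
              (c k : ℂ) * ((b : ℂ) * pd (k + 1, m - k) f (T a b d x)
                + (d : ℂ) * pd (k, m - k + 1) f (T a b d x))
            = (∑ k ∈ Finset.range (m + 1), ((b * c k : ℝ) : ℂ) * pd (k + 1, m - k) f (T a b d x))
              + ∑ k ∈ Finset.range (m + 1), ((d * c k : ℝ) : ℂ) * pd (k, m + 1 - k) f (T a b d x) := by
          rw [← Finset.sum_add_distrib]
          refine Finset.sum_congr rfl fun k hk => ?_
          have hk' : k ≤ m := Nat.lt_succ_iff.mp (Finset.mem_range.mp hk)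
          have : m - k + 1 = m + 1 - k := by omega
          rw [← this]
          push_cast
          ring
        rw [lhs_split]
        have rhs_split : ∑ k ∈ Finset.range (m + 1 + 1),
              ((d * c k + b * (if k = 0 then 0 else c (k - 1)) : ℝ) : ℂ)
                * pd (k, m + 1 - k) f (T a b d x)
            = (∑ k ∈ Finset.range (m + 1 + 1), ((b * (if k = 0 then 0 else c (k - 1)) : ℝ) : ℂ)
                  * pd (k, m + 1 - k) f (T a b d x))
              + ∑ k ∈ Finset.range (m + 1 + 1), ((d * c k : ℝ) : ℂ)
                  * pd (k, m + 1 - k) f (T a b d x) := by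
          rw [← Finset.sum_add_distrib]
          refine Finset.sum_congr rfl fun k hk => ?_
          push_cast
          ring
        rw [rhs_split]
        congr 1
        · rw [Finset.sum_range_succ' (fun k => ((b * (if k = 0 then 0 else c (k - 1)) : ℝ) : ℂ)
              * pd (k, m + 1 - k) f (T a b d x)) (m + 1)]
          simp only [if_pos rfl]
          norm_num
          refine Finset.sum_congr rfl fun k hk => ?_
          have : m + 1 - (k + 1) = m - k := by omega
          simp [this]
        · symm
          rw [Finset.sum_range_succ, hvan (m + 1) (by omega)]
          norm_num

lemma pd_expand (a b d : ℝ) {L : ℕ} {f : ℝ × ℝ → ℂ} (hf : ContDiff ℝ (L : ℕ) f)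
    (n m : ℕ) (h : n + m ≤ L) :
    ∃ c : ℕ → ℝ, (∀ k, |c k| ≤ (|b| + |d|) ^ m) ∧
      ∀ x, pd (n, m) (fun y => f (T a b d y)) x
        = ∑ k ∈ Finset.range (m + 1), ((a ^ n * c k : ℝ) : ℂ)
            * pd (n + k, m - k) f (T a b d x) := by
  induction n with
  | zero =>
      obtain ⟨c, hbd, _, hexp⟩ := pd2_iter_expand a b d hf m (by omega)
      refine ⟨c, hbd, fun x => ?_⟩
      have h0 : pd (0, m) (fun y => f (T a b d y)) x
          = pd2^[m] (fun y => f (T a b d y)) x := rfl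
      rw [h0, hexp x]
      refine Finset.sum_congr rfl fun k hk => ?_
      simp
  | succ n ih =>
      obtain ⟨c, hbd, hexp⟩ := ih (by omega)
      refine ⟨c, hbd, fun x => ?_⟩
      have hdiffk : ∀ k, k ≤ m → Differentiable ℝ (pd (n + k, m - k) f) := fun k hk =>
        diff_pd hf (by omega)
      have hstep : pd (n + 1, m) (fun y => f (T a b d y)) x
          = pd1 (pd (n, m) (fun y => f (T a b d y))) x := by
        rw [pd1_pd]
      rw [hstep, funext hexp]
      have hdsummand : ∀ i ∈ Finset.range (m + 1),
          DifferentiableAt ℝ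
            (fun y => ((a ^ n * c i : ℝ) : ℂ) * pd (n + i, m - i) f (T a b d y)) x := by
        intro i hi
        have hi' : i ≤ m := Nat.lt_succ_iff.mp (Finset.mem_range.mp hi)
        have hcomp : DifferentiableAt ℝ (fun y => pd (n + i, m - i) f (T a b d y)) x :=
          ((hdiffk i hi').comp (T a b d).differentiable).differentiableAt
        exact hcomp.const_mul _
      rw [pd1_sum _ hdsummand]
      refine Finset.sum_congr rfl fun k hk => ?_
      have hk' : k ≤ m := Nat.lt_succ_iff.mp (Finset.mem_range.mp hk)
      have hcomp : DifferentiableAt ℝ (fun y => pd (n + k, m - k) f (T a b d y)) x :=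
        ((hdiffk k hk').comp (T a b d).differentiable).differentiableAt
      rw [pd1_const_mul _ hcomp, pd1_comp a b d ((hdiffk k hk') _), pd1_pd]
      have he : n + 1 + k = n + k + 1 := by omega
      rw [he]
      push_cast
      ring

lemma one_le_brak (x : ℝ) : 1 ≤ brak x := by
  have h := Real.sqrt_le_sqrt (show (1:ℝ) ≤ 1 + x ^ 2 by nlinarith)
  rw [Real.sqrt_one] at h
  exact h

lemma brak_pos (x : ℝ) : 0 < brak x := lt_of_lt_of_le one_pos (one_le_brak x)

lemma brak_mono {x y : ℝ} (h : |x| ≤ |y|) : brak x ≤ brak y := by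
  apply Real.sqrt_le_sqrt
  have := abs_nonneg x
  nlinarith [sq_abs x, sq_abs y]

lemma brak_le_mul {K x y : ℝ} (hK : 1 ≤ K) (h : |y| ≤ K * |x|) : brak y ≤ K * brak x := by
  have h1 : brak y ≤ brak (K * x) := brak_mono (by rwa [abs_mul, abs_of_nonneg (by linarith : (0:ℝ) ≤ K)])
  refine h1.trans ?_
  rw [brak, brak, show K * Real.sqrt (1 + x ^ 2) = Real.sqrt (K^2 * (1 + x^2)) by
    rw [Real.sqrt_mul (by positivity), Real.sqrt_sq (by linarith)]]
  apply Real.sqrt_le_sqrt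
  nlinarith

lemma rpow_neg_comp {x y K : ℝ} (hx : 0 < x) (hy : 0 < y) (hK : 0 < K) (h : x ≤ K * y)
    (N : ℕ) : y ^ (-(N:ℝ)) ≤ K ^ N * x ^ (-(N:ℝ)) := by
  have hxN : x ^ N ≤ K ^ N * y ^ N := by
    calc x ^ N ≤ (K * y) ^ N := pow_le_pow_left₀ hx.le h N
      _ = K ^ N * y ^ N := mul_pow K y N
  rw [Real.rpow_neg hy.le, Real.rpow_neg hx.le, Real.rpow_natCast, Real.rpow_natCast]
  rw [← div_eq_mul_inv, inv_eq_one_div, div_le_div_iff₀ (by positivity) (by positivity)]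
  nlinarith [hxN, pow_pos hx N, pow_pos hy N]

lemma min_one_mul_le {K u v : ℝ} (hK : 1 ≤ K) (hu : 0 ≤ u) (h : v ≤ K * u) :
    min 1 v ≤ K * min 1 u := by
  rcases le_total 1 u with h1 | h1
  · rw [min_eq_left h1]
    exact (min_le_left 1 v).trans (by linarith)
  · rw [min_eq_right h1]
    exact (min_le_right 1 v).trans h

lemma abs_fst_le_nrm (ξ : ℝ × ℝ) : |ξ.1| ≤ nrm ξ := by
  rw [nrm, ← Real.sqrt_sq_eq_abs]
  exact Real.sqrt_le_sqrt (by nlinarith)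

lemma abs_snd_le_nrm (ξ : ℝ × ℝ) : |ξ.2| ≤ nrm ξ := by
  rw [nrm, ← Real.sqrt_sq_eq_abs]
  exact Real.sqrt_le_sqrt (by nlinarith)

lemma nrm_le_add (ξ : ℝ × ℝ) : nrm ξ ≤ |ξ.1| + |ξ.2| := by
  rw [nrm, show |ξ.1| + |ξ.2| = Real.sqrt ((|ξ.1| + |ξ.2|)^2) by
    rw [Real.sqrt_sq (by positivity)]]
  apply Real.sqrt_le_sqrt
  nlinarith [abs_nonneg ξ.1, abs_nonneg ξ.2, sq_abs ξ.1, sq_abs ξ.2]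

lemma nrm_nonneg (ξ : ℝ × ℝ) : 0 ≤ nrm ξ := Real.sqrt_nonneg _

lemma map_eq (α s h : ℝ) (hs : 1 ≤ s) (ζ : ℝ × ℝ) :
    ascale α s⁻¹ (shearInvT h (rot (-(Real.arctan (-h))) (ascale α s ζ)))
      = T (Real.sqrt (1 + h ^ 2))⁻¹
          (-(h * (Real.sqrt (1 + h ^ 2))⁻¹ * s ^ (α - 1)))
          (Real.sqrt (1 + h ^ 2)) ζ := by
  have hs0 : (0:ℝ) < s := lt_of_lt_of_le one_pos hs
  have h1h : (0:ℝ) < 1 + h ^ 2 := by positivity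
  have hsq : Real.sqrt (1 + h ^ 2) ^ 2 = 1 + h ^ 2 := Real.sq_sqrt h1h.le
  have hsqpos : (0:ℝ) < Real.sqrt (1 + h ^ 2) := Real.sqrt_pos.mpr h1h
  have hθ : -(Real.arctan (-h)) = Real.arctan h := by rw [Real.arctan_neg]; ring
  have hrs : s ^ (α - 1) = s ^ α * s⁻¹ := by
    rw [Real.rpow_sub hs0, Real.rpow_one, div_eq_mul_inv]
  have hinv : (s⁻¹ : ℝ) ^ α = (s ^ α)⁻¹ := Real.inv_rpow hs0.le α
  have hsα : (0:ℝ) < s ^ α := Real.rpow_pos_of_pos hs0 α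
  simp only [ascale, shearInvT, rot, T_apply, hθ, Real.cos_arctan, Real.sin_arctan]
  rw [Prod.ext_iff]
  constructor
  · show s⁻¹ * _ = _
    rw [hrs]
    field_simp
    ring
  · show (s⁻¹ : ℝ) ^ α * _ = _
    rw [hinv]
    field_simp
    rw [hsq]; ring

end Aux
end AlphaMolecules

open AlphaMolecules
open AlphaMolecules.Aux

set_option maxHeartbeats 2000000 in
/-- key estimate in Proposition 3.9: if `γ̂` satisfies the α-molecule
frequency estimate of order `(L, M, N₁, N₂)` at scale `s ≥ 1`, and `|h| ≤ B` with
`θ = arctan(−h)`, then `ĝ(ξ) := γ̂(A_{α,s⁻¹}(S_h)^{-T}R_θ^T A_{α,s} ξ)` satisfies the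
same estimate with a constant `C'` depending only on `α, B, C, L, M, N₁, N₂`. -/
theorem stmt14 (α : ℝ) (hα : α ∈ Set.Icc (0 : ℝ) 1) (B C : ℝ) (hB : 0 < B) (hC : 0 < C)
    (L M N₁ N₂ : ℕ) :
    ∃ C' > (0 : ℝ), ∀ s h : ℝ, 1 ≤ s → |h| ≤ B →
      ∀ γhat : ℝ × ℝ → ℂ, ContDiff ℝ L γhat →
      (∀ ρ : ℕ × ℕ, ρ.1 + ρ.2 ≤ L → ∀ ξ : ℝ × ℝ,
        ‖pd ρ γhat ξ‖ ≤
          C * (min 1 (s⁻¹ + |ξ.1| + s ^ (-(1 - α)) * |ξ.2|)) ^ (M : ℝ)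
            * brak (nrm ξ) ^ (-(N₁ : ℝ)) * brak ξ.2 ^ (-(N₂ : ℝ))) →
      ∀ ρ : ℕ × ℕ, ρ.1 + ρ.2 ≤ L → ∀ ξ : ℝ × ℝ,
        ‖pd ρ (fun ζ => γhat
            (ascale α s⁻¹ (shearInvT h (rot (-(Real.arctan (-h))) (ascale α s ζ))))) ξ‖
          ≤ C' * (min 1 (s⁻¹ + |ξ.1| + s ^ (-(1 - α)) * |ξ.2|)) ^ (M : ℝ)
              * brak (nrm ξ) ^ (-(N₁ : ℝ)) * brak ξ.2 ^ (-(N₂ : ℝ)) := by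
  obtain ⟨hα0, hα1⟩ := hα
  set SB := Real.sqrt (1 + B ^ 2) with hSBdef
  have hSB1 : 1 ≤ SB := by
    have h := Real.sqrt_le_sqrt (show (1:ℝ) ≤ 1 + B ^ 2 by nlinarith)
    rw [Real.sqrt_one] at h
    exact h
  set D := 1 + B + SB with hDdef
  have hD1 : (1:ℝ) ≤ D := by rw [hDdef]; linarith
  have hD0 : (0:ℝ) < D := by linarith
  refine ⟨C * (L+1) * D^L * D^M * (4*D^2)^N₁, by positivity, ?_⟩
  intro s h hs hh γhat hsm hbd ρ hρ ξ
  have hs0 : (0:ℝ) < s := lt_of_lt_of_le one_pos hs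
  have h1h : (0:ℝ) < 1 + h ^ 2 := by positivity
  have hdqpos : (0:ℝ) < Real.sqrt (1 + h ^ 2) := Real.sqrt_pos.mpr h1h
  have hdqsq : Real.sqrt (1 + h ^ 2) ^ 2 = 1 + h ^ 2 := Real.sq_sqrt h1h.le
  have hdq1 : 1 ≤ Real.sqrt (1 + h ^ 2) := by
    have hx := Real.sqrt_le_sqrt (show (1:ℝ) ≤ 1 + h ^ 2 by nlinarith)
    rw [Real.sqrt_one] at hx
    exact hx
  have hdqB : Real.sqrt (1 + h ^ 2) ≤ SB := by
    rw [hSBdef]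
    apply Real.sqrt_le_sqrt
    nlinarith [sq_abs h, abs_nonneg h]
  have hfun : (fun ζ => γhat
        (ascale α s⁻¹ (shearInvT h (rot (-(Real.arctan (-h))) (ascale α s ζ)))))
      = fun ζ => γhat (T (Real.sqrt (1 + h ^ 2))⁻¹
          (-(h * (Real.sqrt (1 + h ^ 2))⁻¹ * s ^ (α - 1)))
          (Real.sqrt (1 + h ^ 2)) ζ) := by
    funext ζ
    rw [map_eq α s h hs ζ]
  rw [hfun]
  set dq := Real.sqrt (1 + h ^ 2) with hdqdef
  set aa := dq⁻¹ with haadef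
  have haa0 : (0:ℝ) < aa := by positivity
  have haa1 : aa ≤ 1 := by rw [haadef]; exact inv_le_one_of_one_le₀ hdq1
  have haadq : aa * dq = 1 := inv_mul_cancel₀ hdqpos.ne'
  set tt := s ^ (α - 1) with httdef
  have htt0 : (0:ℝ) < tt := Real.rpow_pos_of_pos hs0 _
  have htt1 : tt ≤ 1 := Real.rpow_le_one_of_one_le_of_nonpos hs (by linarith)
  set bb := -(h * aa * tt) with hbbdef
  clear_value bb tt aa dq
  have hbbabs : |bb| ≤ B * tt := by
    rw [hbbdef, abs_neg, abs_mul, abs_mul, abs_of_pos haa0, abs_of_pos htt0]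
    apply mul_le_mul_of_nonneg_right _ htt0.le
    nlinarith [abs_nonneg h, mul_nonneg (abs_nonneg h) (sub_nonneg.mpr haa1)]
  have hbbB : |bb| ≤ B := by nlinarith [abs_nonneg bb]
  have hsum_bd : |bb| + |dq| ≤ D := by
    rw [abs_of_pos hdqpos, hDdef]; linarith
  obtain ⟨c, hc, hexp⟩ := pd_expand aa bb dq hsm ρ.1 ρ.2 hρ
  have hexpξ : pd ρ (fun ζ => γhat (T aa bb dq ζ)) ξ
      = ∑ k ∈ Finset.range (ρ.2 + 1), ((aa ^ ρ.1 * c k : ℝ) : ℂ)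
          * pd (ρ.1 + k, ρ.2 - k) γhat (T aa bb dq ξ) := hexp ξ
  rw [hexpξ]
  set η := T aa bb dq ξ with hηdef
  clear_value η
  have hη1 : η.1 = aa * ξ.1 + bb * ξ.2 := by rw [hηdef, T_apply]
  have hη2 : η.2 = dq * ξ.2 := by rw [hηdef, T_apply]
  -- exponent rewrite
  have hexpeq : s ^ (-(1 - α)) = tt := by
    rw [httdef, show (-(1 - α)) = α - 1 by ring]
  -- weight comparisons
  have hφξ0 : (0:ℝ) ≤ s⁻¹ + |ξ.1| + s ^ (-(1 - α)) * |ξ.2| := by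
    have := abs_nonneg ξ.1; have := abs_nonneg ξ.2; positivity
  have hφcomp : s⁻¹ + |η.1| + s ^ (-(1 - α)) * |η.2|
      ≤ D * (s⁻¹ + |ξ.1| + s ^ (-(1 - α)) * |ξ.2|) := by
    rw [hexpeq, hη1, hη2]
    have e1 : |aa * ξ.1 + bb * ξ.2| ≤ |ξ.1| + B * tt * |ξ.2| := by
      calc |aa * ξ.1 + bb * ξ.2| ≤ |aa| * |ξ.1| + |bb| * |ξ.2| := by
            rw [← abs_mul, ← abs_mul]; exact abs_add_le _ _
        _ ≤ |ξ.1| + B * tt * |ξ.2| := by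
            rw [abs_of_pos haa0]
            have := abs_nonneg ξ.1; have := abs_nonneg ξ.2
            nlinarith [hbbabs]
    have e2 : tt * |dq * ξ.2| ≤ SB * (tt * |ξ.2|) := by
      rw [abs_mul, abs_of_pos hdqpos]
      calc tt * (dq * |ξ.2|) = dq * (tt * |ξ.2|) := by ring
        _ ≤ SB * (tt * |ξ.2|) :=
            mul_le_mul_of_nonneg_right hdqB (mul_nonneg htt0.le (abs_nonneg ξ.2))
    have hsinv : (0:ℝ) ≤ s⁻¹ := by positivity
    have hBSB : (0:ℝ) ≤ B + SB := by linarith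
    rw [hDdef]
    nlinarith [e1, e2, mul_nonneg hBSB hsinv, mul_nonneg hBSB (abs_nonneg ξ.1),
      mul_nonneg htt0.le (abs_nonneg ξ.2), abs_nonneg ξ.1, abs_nonneg ξ.2]
  have hmin : (min 1 (s⁻¹ + |η.1| + s ^ (-(1 - α)) * |η.2|)) ^ (M:ℝ)
      ≤ D ^ M * (min 1 (s⁻¹ + |ξ.1| + s ^ (-(1 - α)) * |ξ.2|)) ^ (M:ℝ) := by
    have h1 := min_one_mul_le hD1 hφξ0 hφcomp
    have h0 : (0:ℝ) ≤ min 1 (s⁻¹ + |η.1| + s ^ (-(1 - α)) * |η.2|) := by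
      apply le_min zero_le_one
      have := abs_nonneg η.1; have := abs_nonneg η.2; positivity
    calc (min 1 (s⁻¹ + |η.1| + s ^ (-(1 - α)) * |η.2|)) ^ (M:ℝ)
        ≤ (D * min 1 (s⁻¹ + |ξ.1| + s ^ (-(1 - α)) * |ξ.2|)) ^ (M:ℝ) :=
          Real.rpow_le_rpow h0 h1 (by positivity)
      _ = D ^ M * (min 1 (s⁻¹ + |ξ.1| + s ^ (-(1 - α)) * |ξ.2|)) ^ (M:ℝ) := by
          rw [Real.mul_rpow hD0.le (le_min zero_le_one hφξ0), Real.rpow_natCast]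
  have hx2 : |ξ.2| ≤ |η.2| := by
    rw [hη2, abs_mul, abs_of_pos hdqpos]
    nlinarith [abs_nonneg ξ.2]
  have hnle : nrm ξ ≤ (4 * D ^ 2) * nrm η := by
    have hx1eq : ξ.1 = dq * η.1 - dq * bb * ξ.2 := by
      rw [hη1]
      have : dq * (aa * ξ.1 + bb * ξ.2) = (dq * aa) * ξ.1 + dq * bb * ξ.2 := by ring
      rw [this, mul_comm dq aa, haadq, one_mul]
      ring
    have hx1 : |ξ.1| ≤ SB * |η.1| + SB * B * |ξ.2| := by
      rw [hx1eq]
      calc |dq * η.1 - dq * bb * ξ.2| ≤ |dq * η.1| + |dq * bb * ξ.2| := abs_sub _ _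
        _ ≤ SB * |η.1| + SB * B * |ξ.2| := by
            rw [abs_mul, abs_mul, abs_mul, abs_of_pos hdqpos]
            have g1 : dq * |η.1| ≤ SB * |η.1| :=
              mul_le_mul_of_nonneg_right hdqB (abs_nonneg η.1)
            have g2 : dq * (|bb| * |ξ.2|) ≤ SB * B * |ξ.2| := by
              have g3 : dq * (|bb| * |ξ.2|) ≤ SB * (B * |ξ.2|) :=
                mul_le_mul hdqB (mul_le_mul_of_nonneg_right hbbB (abs_nonneg ξ.2))
                  (by positivity) (by linarith)
              calc dq * (|bb| * |ξ.2|) ≤ SB * (B * |ξ.2|) := g3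
                _ = SB * B * |ξ.2| := by ring
            linarith [g1, g2]
    have hSB0 : (0:ℝ) ≤ SB := by linarith
    have hx2' : SB * B * |ξ.2| ≤ SB * B * |η.2| :=
      mul_le_mul_of_nonneg_left hx2 (mul_nonneg hSB0 hB.le)
    calc nrm ξ ≤ |ξ.1| + |ξ.2| := nrm_le_add ξ
      _ ≤ (SB * |η.1| + SB * B * |η.2|) + |η.2| := by linarith [hx1, hx2, hx2']
      _ ≤ SB * nrm η + SB * B * nrm η + nrm η := by
          have g1 : SB * |η.1| ≤ SB * nrm η :=
            mul_le_mul_of_nonneg_left (abs_fst_le_nrm η) hSB0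
          have g2 : SB * B * |η.2| ≤ SB * B * nrm η :=
            mul_le_mul_of_nonneg_left (abs_snd_le_nrm η) (mul_nonneg hSB0 hB.le)
          linarith [abs_snd_le_nrm η]
      _ = (SB + SB * B + 1) * nrm η := by ring
      _ ≤ (4 * D ^ 2) * nrm η := by
          apply mul_le_mul_of_nonneg_right _ (nrm_nonneg η)
          have hSBD : SB ≤ D := by rw [hDdef]; linarith
          have hBD : 1 + B ≤ D := by rw [hDdef]; linarith
          have hp : SB * (1 + B) ≤ D * D := mul_le_mul hSBD hBD (by linarith) (by linarith)
          nlinarith [hp, hD1]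
  have hbrak_nrm : brak (nrm ξ) ≤ (4 * D ^ 2) * brak (nrm η) := by
    apply brak_le_mul (by nlinarith [hD1, sq_nonneg (D - 1)])
    rw [abs_of_nonneg (nrm_nonneg ξ), abs_of_nonneg (nrm_nonneg η)]
    exact hnle
  have hnrmcomp : brak (nrm η) ^ (-(N₁:ℝ)) ≤ (4 * D ^ 2) ^ N₁ * brak (nrm ξ) ^ (-(N₁:ℝ)) :=
    rpow_neg_comp (brak_pos _) (brak_pos _) (by positivity) hbrak_nrm N₁
  have hb2comp : brak η.2 ^ (-(N₂:ℝ)) ≤ brak ξ.2 ^ (-(N₂:ℝ)) := by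
    have h1 : brak ξ.2 ≤ 1 * brak η.2 := by rw [one_mul]; exact brak_mono hx2
    have := rpow_neg_comp (brak_pos ξ.2) (brak_pos η.2) one_pos h1 N₂
    simpa using this
  -- term bound
  have hWη0 : (0:ℝ) ≤ (min 1 (s⁻¹ + |η.1| + s ^ (-(1 - α)) * |η.2|)) ^ (M:ℝ)
      * brak (nrm η) ^ (-(N₁:ℝ)) * brak η.2 ^ (-(N₂:ℝ)) := by
    have h0 : (0:ℝ) ≤ min 1 (s⁻¹ + |η.1| + s ^ (-(1 - α)) * |η.2|) := by
      apply le_min zero_le_one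
      have := abs_nonneg η.1; have := abs_nonneg η.2; positivity
    have := brak_pos (nrm η); have := brak_pos η.2
    positivity
  have hterm : ∀ k ∈ Finset.range (ρ.2 + 1),
      ‖((aa ^ ρ.1 * c k : ℝ) : ℂ) * pd (ρ.1 + k, ρ.2 - k) γhat η‖
        ≤ D ^ L * (C * ((min 1 (s⁻¹ + |η.1| + s ^ (-(1 - α)) * |η.2|)) ^ (M:ℝ)
            * brak (nrm η) ^ (-(N₁:ℝ)) * brak η.2 ^ (-(N₂:ℝ)))) := by
    intro k hk
    have hk' : k ≤ ρ.2 := Nat.lt_succ_iff.mp (Finset.mem_range.mp hk)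
    rw [norm_mul, Complex.norm_real, Real.norm_eq_abs]
    have h1 : |aa ^ ρ.1 * c k| ≤ D ^ L := by
      rw [abs_mul, abs_pow, abs_of_pos haa0]
      have e1 : aa ^ ρ.1 ≤ 1 := pow_le_one₀ haa0.le haa1
      have e2 : |c k| ≤ (|bb| + |dq|) ^ ρ.2 := hc k
      have e3 : (|bb| + |dq|) ^ ρ.2 ≤ D ^ ρ.2 :=
        pow_le_pow_left₀ (by positivity) hsum_bd ρ.2
      have e4 : D ^ ρ.2 ≤ D ^ L := pow_le_pow_right₀ hD1 (by omega)
      have e5 : (0:ℝ) ≤ aa ^ ρ.1 := by positivity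
      nlinarith [abs_nonneg (c k)]
    have h2 : ‖pd (ρ.1 + k, ρ.2 - k) γhat η‖
        ≤ C * ((min 1 (s⁻¹ + |η.1| + s ^ (-(1 - α)) * |η.2|)) ^ (M:ℝ)
            * brak (nrm η) ^ (-(N₁:ℝ)) * brak η.2 ^ (-(N₂:ℝ))) := by
      have := hbd (ρ.1 + k, ρ.2 - k) (by simp; omega) η
      calc ‖pd (ρ.1 + k, ρ.2 - k) γhat η‖
          ≤ C * (min 1 (s⁻¹ + |η.1| + s ^ (-(1 - α)) * |η.2|)) ^ (M:ℝ)
              * brak (nrm η) ^ (-(N₁:ℝ)) * brak η.2 ^ (-(N₂:ℝ)) := this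
        _ = _ := by ring
    exact mul_le_mul h1 h2 (norm_nonneg _) (by positivity)
  -- nonnegativity facts
  have hA1 : (0:ℝ) ≤ (min 1 (s⁻¹ + |η.1| + s ^ (-(1 - α)) * |η.2|)) ^ (M:ℝ) := by
    apply Real.rpow_nonneg
    apply le_min zero_le_one
    have := abs_nonneg η.1; have := abs_nonneg η.2; positivity
  have hA2 : (0:ℝ) ≤ brak (nrm η) ^ (-(N₁:ℝ)) := Real.rpow_nonneg (brak_pos _).le _
  have hA3 : (0:ℝ) ≤ brak η.2 ^ (-(N₂:ℝ)) := Real.rpow_nonneg (brak_pos _).le _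
  have hB1 : (0:ℝ) ≤ (min 1 (s⁻¹ + |ξ.1| + s ^ (-(1 - α)) * |ξ.2|)) ^ (M:ℝ) :=
    Real.rpow_nonneg (le_min zero_le_one hφξ0) _
  have hB2 : (0:ℝ) ≤ brak (nrm ξ) ^ (-(N₁:ℝ)) := Real.rpow_nonneg (brak_pos _).le _
  have hB3 : (0:ℝ) ≤ brak ξ.2 ^ (-(N₂:ℝ)) := Real.rpow_nonneg (brak_pos _).le _
  have hWstep : (min 1 (s⁻¹ + |η.1| + s ^ (-(1 - α)) * |η.2|)) ^ (M:ℝ)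
        * brak (nrm η) ^ (-(N₁:ℝ)) * brak η.2 ^ (-(N₂:ℝ))
      ≤ (D ^ M * (min 1 (s⁻¹ + |ξ.1| + s ^ (-(1 - α)) * |ξ.2|)) ^ (M:ℝ))
        * ((4 * D ^ 2) ^ N₁ * brak (nrm ξ) ^ (-(N₁:ℝ)))
        * brak ξ.2 ^ (-(N₂:ℝ)) := by
    have step1 : (min 1 (s⁻¹ + |η.1| + s ^ (-(1 - α)) * |η.2|)) ^ (M:ℝ)
          * brak (nrm η) ^ (-(N₁:ℝ))
        ≤ (D ^ M * (min 1 (s⁻¹ + |ξ.1| + s ^ (-(1 - α)) * |ξ.2|)) ^ (M:ℝ))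
          * ((4 * D ^ 2) ^ N₁ * brak (nrm ξ) ^ (-(N₁:ℝ))) :=
      mul_le_mul hmin hnrmcomp hA2 (by positivity)
    exact mul_le_mul step1 hb2comp hA3 (by positivity)
  calc ‖∑ k ∈ Finset.range (ρ.2 + 1), ((aa ^ ρ.1 * c k : ℝ) : ℂ)
          * pd (ρ.1 + k, ρ.2 - k) γhat η‖
      ≤ ∑ k ∈ Finset.range (ρ.2 + 1), ‖((aa ^ ρ.1 * c k : ℝ) : ℂ)
          * pd (ρ.1 + k, ρ.2 - k) γhat η‖ := norm_sum_le _ _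
    _ ≤ ∑ _k ∈ Finset.range (ρ.2 + 1), D ^ L
          * (C * ((min 1 (s⁻¹ + |η.1| + s ^ (-(1 - α)) * |η.2|)) ^ (M:ℝ)
            * brak (nrm η) ^ (-(N₁:ℝ)) * brak η.2 ^ (-(N₂:ℝ)))) :=
        Finset.sum_le_sum hterm
    _ = ((ρ.2 : ℝ) + 1) * (D ^ L
          * (C * ((min 1 (s⁻¹ + |η.1| + s ^ (-(1 - α)) * |η.2|)) ^ (M:ℝ)
            * brak (nrm η) ^ (-(N₁:ℝ)) * brak η.2 ^ (-(N₂:ℝ))))) := by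
        rw [Finset.sum_const, Finset.card_range, nsmul_eq_mul]
        push_cast
        ring
    _ ≤ ((L : ℝ) + 1) * (D ^ L
          * (C * ((min 1 (s⁻¹ + |η.1| + s ^ (-(1 - α)) * |η.2|)) ^ (M:ℝ)
            * brak (nrm η) ^ (-(N₁:ℝ)) * brak η.2 ^ (-(N₂:ℝ))))) := by
        apply mul_le_mul_of_nonneg_right
        · have : (ρ.2 : ℝ) ≤ (L : ℝ) := by exact_mod_cast (by omega : ρ.2 ≤ L)
          linarith
        · positivity
    _ ≤ ((L : ℝ) + 1) * (D ^ L
          * (C * ((D ^ M * (min 1 (s⁻¹ + |ξ.1| + s ^ (-(1 - α)) * |ξ.2|)) ^ (M:ℝ))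
            * ((4 * D ^ 2) ^ N₁ * brak (nrm ξ) ^ (-(N₁:ℝ)))
            * brak ξ.2 ^ (-(N₂:ℝ))))) := by
        apply mul_le_mul_of_nonneg_left _ (by positivity)
        apply mul_le_mul_of_nonneg_left _ (by positivity)
        exact mul_le_mul_of_nonneg_left hWstep hC.le
    _ = C * ((L:ℝ) + 1) * D ^ L * D ^ M * (4 * D ^ 2) ^ N₁
          * (min 1 (s⁻¹ + |ξ.1| + s ^ (-(1 - α)) * |ξ.2|)) ^ (M:ℝ)
          * brak (nrm ξ) ^ (-(N₁:ℝ)) * brak ξ.2 ^ (-(N₂:ℝ)) := by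
        ring
end
end
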